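/- arXiv:2306.17607 — 4 statements merged into one kernel-verified Lean document; each statement's English description precedes it below -/
import Mathlib

section
/- Let c be an edge-coloring of K_{n,n} = G(U,V), n ≥ 3, with no rainbow K_{1,3}, using k ≥ 4 colors, and suppose every vertex of U sees exactly 2 colors and any two vertices of U have intersecting color sets. If there exist u₁, u₂ ∈ U with C(u₁) = {1,2} and C(u₂) = {1,3}, then for every color i ∈ {4,...,k}, every vertex u ∈ U incident with color i satisfies C(u) = {1, i}, and consequently every vertex v ∈ V sees at most one color different from color 1. -/
open Function Finset SimpleGraph

/-- A rainbow path on 4 vertices `u₁ v₁ u₂ v₂` (middle pattern). -/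
def rbP4pat {N : ℕ} {γ : Type*} (c : Fin N → Fin N → γ) : Prop :=
  ∃ u₁ u₂ v₁ v₂ : Fin N, u₁ ≠ u₂ ∧ v₁ ≠ v₂ ∧
    c u₁ v₁ ≠ c u₂ v₁ ∧ c u₁ v₁ ≠ c u₂ v₂ ∧ c u₂ v₁ ≠ c u₂ v₂

/-- The coloring `c` of `K_{N,N}` contains a rainbow path on 4 vertices. -/
def hasRainbowP4 {N : ℕ} {γ : Type*} (c : Fin N → Fin N → γ) : Prop :=
  rbP4pat c ∨ rbP4pat (fun v u => c u v)

/-- A rainbow path on 5 vertices `u₁ v₁ u₂ v₂ u₃` (one-sided pattern). -/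
def rbP5pat {N : ℕ} {γ : Type*} (c : Fin N → Fin N → γ) : Prop :=
  ∃ u₁ u₂ u₃ v₁ v₂ : Fin N, u₁ ≠ u₂ ∧ u₁ ≠ u₃ ∧ u₂ ≠ u₃ ∧ v₁ ≠ v₂ ∧
    c u₁ v₁ ≠ c u₂ v₁ ∧ c u₁ v₁ ≠ c u₂ v₂ ∧ c u₁ v₁ ≠ c u₃ v₂ ∧
    c u₂ v₁ ≠ c u₂ v₂ ∧ c u₂ v₁ ≠ c u₃ v₂ ∧ c u₂ v₂ ≠ c u₃ v₂

/-- The coloring `c` of `K_{N,N}` contains a rainbow path on 5 vertices. -/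
def hasRainbowP5 {N : ℕ} {γ : Type*} (c : Fin N → Fin N → γ) : Prop :=
  rbP5pat c ∨ rbP5pat (fun v u => c u v)

/-- The coloring `c` of `K_{N,N}` contains a rainbow star `K_{1,3}`:
some vertex (on either side) has three incident edges with pairwise distinct colors. -/
def hasRainbowK13 {N : ℕ} {γ : Type*} (c : Fin N → Fin N → γ) : Prop :=
  (∃ u v₁ v₂ v₃ : Fin N, c u v₁ ≠ c u v₂ ∧ c u v₁ ≠ c u v₃ ∧ c u v₂ ≠ c u v₃) ∨
  (∃ v u₁ u₂ u₃ : Fin N, c u₁ v ≠ c u₂ v ∧ c u₁ v ≠ c u₃ v ∧ c u₂ v ≠ c u₃ v)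

/-- The coloring `c` of `K_{N,N}` (first coordinate: side `U`, second: side `V`)
contains a monochromatic copy of the (bipartite) graph `H`. -/
def hasMonoCopy {N : ℕ} {γ : Type*} {α : Type*} (c : Fin N → Fin N → γ)
    (H : SimpleGraph α) : Prop :=
  ∃ i : γ, ∃ f : α → Fin N ⊕ Fin N, Function.Injective f ∧
    ∀ a b, H.Adj a b → ∃ u v : Fin N, c u v = i ∧
      ((f a = Sum.inl u ∧ f b = Sum.inr v) ∨ (f a = Sum.inr v ∧ f b = Sum.inl u))

/-- The coloring `c` of `K_{N,N}` contains a monochromatic copy of `K_{s,t}`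
(in either orientation with respect to the two sides). -/
def hasMonoKst {N : ℕ} {γ : Type*} (c : Fin N → Fin N → γ) (s t : ℕ) : Prop :=
  ∃ i : γ, ∃ S T : Finset (Fin N),
    ((S.card = s ∧ T.card = t) ∨ (S.card = t ∧ T.card = s)) ∧
    ∀ u ∈ S, ∀ v ∈ T, c u v = i

/-- Disjoint union of a family of graphs, on the sigma type. -/
def sigmaUnion {ι : Type*} {β : ι → Type*} (G : ∀ i, SimpleGraph (β i)) :
    SimpleGraph (Σ i, β i) where
  Adj x y := ∃ i a b, (G i).Adj a b ∧ x = ⟨i, a⟩ ∧ y = ⟨i, b⟩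
  symm := by constructor; rintro x y ⟨i, a, b, h, rfl, rfl⟩; exact ⟨i, b, a, h.symm, rfl, rfl⟩
  loopless := by
    constructor
    rintro x ⟨i, a, b, h, rfl, h2⟩
    obtain rfl : a = b := by simpa using h2
    exact (G i).irrefl h


/-- no rainbow `K_{1,3}`, exactly `k ≥ 4` colors (labeled `1,…,k`),
every vertex of `U` sees exactly 2 colors, color sets of vertices of `U` pairwise
intersect, and `C(u₁) = {1,2}`, `C(u₂) = {1,3}`.  Then every vertex of `U` incident
with a color `i ∈ {4,…,k}` has color set `{1,i}`, and every vertex of `V` sees at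
most one color different from color 1. -/
theorem stmt2 (n k : ℕ) (hn : 3 ≤ n) (hk : 4 ≤ k) (c : Fin n → Fin n → ℕ)
    (hcolors : (Finset.univ ×ˢ Finset.univ).image (fun p : Fin n × Fin n => c p.1 p.2)
      = Finset.Icc 1 k)
    (h : ¬ hasRainbowK13 c)
    (hdeg : ∀ u : Fin n, (Finset.univ.image (fun v => c u v)).card = 2)
    (hint : ∀ u u' : Fin n,
      ((Finset.univ.image (fun v => c u v)) ∩ (Finset.univ.image (fun v => c u' v))).Nonempty)
    (u₁ u₂ : Fin n)
    (h1 : Finset.univ.image (fun v => c u₁ v) = ({1, 2} : Finset ℕ))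
    (h2 : Finset.univ.image (fun v => c u₂ v) = ({1, 3} : Finset ℕ)) :
    (∀ i : ℕ, 4 ≤ i → i ≤ k → ∀ u : Fin n,
      i ∈ Finset.univ.image (fun v => c u v) →
      Finset.univ.image (fun v => c u v) = ({1, i} : Finset ℕ)) ∧
    (∀ v : Fin n, ((Finset.univ.image (fun u => c u v)) \ ({1} : Finset ℕ)).card ≤ 1) := by
  have part1 : ∀ i : ℕ, 4 ≤ i → i ≤ k → ∀ u : Fin n,
      i ∈ Finset.univ.image (fun v => c u v) →
      Finset.univ.image (fun v => c u v) = ({1, i} : Finset ℕ) := by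
    intro i hi4 hik u hiu
    obtain ⟨x, hx⟩ := hint u u₁
    obtain ⟨y, hy⟩ := hint u u₂
    rw [h1, Finset.mem_inter] at hx
    rw [h2, Finset.mem_inter] at hy
    obtain ⟨hxu, hx12⟩ := hx
    obtain ⟨hyu, hy13⟩ := hy
    simp only [Finset.mem_insert, Finset.mem_singleton] at hx12 hy13
    have h1u : (1 : ℕ) ∈ Finset.univ.image (fun v => c u v) := by
      rcases hx12 with rfl | rfl
      · exact hxu
      · -- x = 2 : derive contradiction
        exfalso
        have hsub : ({2, i} : Finset ℕ) ⊆ Finset.univ.image (fun v => c u v) := by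
          intro z hz
          simp only [Finset.mem_insert, Finset.mem_singleton] at hz
          rcases hz with rfl | rfl
          · exact hxu
          · exact hiu
        have hcard2 : ({2, i} : Finset ℕ).card = 2 := by
          rw [Finset.card_insert_of_notMem (by simp; omega)]; simp
        have heq := Finset.eq_of_subset_of_card_le hsub (by rw [hdeg u, hcard2])
        rw [← heq] at hyu
        simp only [Finset.mem_insert, Finset.mem_singleton] at hyu
        omega
    have hsub : ({1, i} : Finset ℕ) ⊆ Finset.univ.image (fun v => c u v) := by
      intro z hz
      simp only [Finset.mem_insert, Finset.mem_singleton] at hz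
      rcases hz with rfl | rfl
      · exact h1u
      · exact hiu
    have hcard2 : ({1, i} : Finset ℕ).card = 2 := by
      rw [Finset.card_insert_of_notMem (by simp; omega)]; simp
    exact (Finset.eq_of_subset_of_card_le hsub (by rw [hdeg u, hcard2])).symm
  refine ⟨part1, ?_⟩
  -- find a vertex u₄ with color set {1, 4}
  have h4 : (4 : ℕ) ∈ Finset.Icc 1 k := by simp; omega
  rw [← hcolors] at h4
  obtain ⟨p, -, hp⟩ := Finset.mem_image.mp h4
  have h4u : (4 : ℕ) ∈ Finset.univ.image (fun v => c p.1 v) :=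
    Finset.mem_image.mpr ⟨p.2, Finset.mem_univ _, hp⟩
  have hC4 : Finset.univ.image (fun v => c p.1 v) = ({1, 4} : Finset ℕ) :=
    part1 4 le_rfl hk p.1 h4u
  intro v
  by_contra hcard
  push_neg at hcard
  obtain ⟨a, ha, b, hb, hab⟩ := Finset.one_lt_card.mp hcard
  rw [Finset.mem_sdiff] at ha hb
  obtain ⟨ha, ha1⟩ := ha
  obtain ⟨hb, hb1⟩ := hb
  simp only [Finset.mem_singleton] at ha1 hb1
  obtain ⟨ua, -, hua⟩ := Finset.mem_image.mp ha
  obtain ⟨ub, -, hub⟩ := Finset.mem_image.mp hb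
  have key : ∀ u'' : Fin n, c u'' v = a ∨ c u'' v = b := by
    intro u''
    by_contra hcc
    push_neg at hcc
    exact h (Or.inr ⟨v, ua, ub, u'', by rw [hua, hub]; exact hab,
      by rw [hua]; exact fun hh => hcc.1 hh.symm,
      by rw [hub]; exact fun hh => hcc.2 hh.symm⟩)
  have hc1 : c u₁ v ∈ ({1, 2} : Finset ℕ) := by
    rw [← h1]; exact Finset.mem_image.mpr ⟨v, Finset.mem_univ _, rfl⟩
  have hc2 : c u₂ v ∈ ({1, 3} : Finset ℕ) := by
    rw [← h2]; exact Finset.mem_image.mpr ⟨v, Finset.mem_univ _, rfl⟩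
  have hc4 : c p.1 v ∈ ({1, 4} : Finset ℕ) := by
    rw [← hC4]; exact Finset.mem_image.mpr ⟨v, Finset.mem_univ _, rfl⟩
  simp only [Finset.mem_insert, Finset.mem_singleton] at hc1 hc2 hc4
  have k1 := key u₁
  have k2 := key u₂
  have k4 := key p.1
  omega
end

section
/- For integers k ≥ 3 and r, l ≥ 2, every edge-coloring of K_{N,N} with exactly k colors, where N ≥ k(⌊r/2⌋ + ⌊(r+l)/2⌋) − k + 1, contains either a rainbow path P_4 or a monochromatic copy of P_r ∪ P_{r+l}. -/
open Function Finset SimpleGraph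

-- dichotomy lemma
lemma dichotomy {N : ℕ} {γ : Type*} (c : Fin N → Fin N → γ)
    (h4 : ¬ hasRainbowP4 c)
    (i1 i2 i3 : γ) (h12 : i1 ≠ i2) (h13 : i1 ≠ i3) (h23 : i2 ≠ i3)
    (e1 : ∃ u v, c u v = i1) (e2 : ∃ u v, c u v = i2) (e3 : ∃ u v, c u v = i3) :
    (∀ u v v', c u v = c u v') ∨ (∀ v u u', c u v = c u' v) := by
  have P1 : ∀ u₁ u₂ v₁ v₂ : Fin N, u₁ ≠ u₂ → v₁ ≠ v₂ →
      c u₁ v₁ = c u₂ v₁ ∨ c u₁ v₁ = c u₂ v₂ ∨ c u₂ v₁ = c u₂ v₂ := by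
    intro u₁ u₂ v₁ v₂ h1 h2
    by_contra h
    push_neg at h
    exact h4 (Or.inl ⟨u₁, u₂, v₁, v₂, h1, h2, h.1, h.2.1, h.2.2⟩)
  have P2 : ∀ u₁ u₂ v₁ v₂ : Fin N, u₁ ≠ u₂ → v₁ ≠ v₂ →
      c u₁ v₁ = c u₁ v₂ ∨ c u₁ v₁ = c u₂ v₂ ∨ c u₁ v₂ = c u₂ v₂ := by
    intro u₁ u₂ v₁ v₂ h1 h2
    by_contra h
    push_neg at h
    exact h4 (Or.inr ⟨v₁, v₂, u₁, u₂, h2, h1, h.1, h.2.1, h.2.2⟩)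
  by_contra hcon
  push_neg at hcon
  obtain ⟨⟨u₀, vA, vB, hab⟩, ⟨v₀, u₁, u₂, hy⟩⟩ := hcon
  have hvAB : vA ≠ vB := fun h => hab (by rw [h])
  have Key : ∀ v u, c u v = c u₀ vA ∨ c u v = c u₀ vB ∨ (∀ u', c u' v = c u v) := by
    intro v u
    by_cases hxa : c u₀ v = c u₀ vA
    · have hall : ∀ u', c u' v = c u₀ vA ∨ c u' v = c u₀ vB := by
        intro u'
        by_cases h' : u' = u₀
        · subst h'; exact Or.inl hxa
        have hvB : v ≠ vB := by
          intro h; rw [h] at hxa; exact hab hxa.symm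
        rcases P2 u₀ u' vB v (fun h => h' h.symm) (Ne.symm hvB) with h | h | h
        · exact absurd (hxa.symm.trans h.symm) hab
        · exact Or.inr h.symm
        · exact Or.inl (h.symm.trans hxa)
      rcases hall u with h | h
      · exact Or.inl h
      · exact Or.inr (Or.inl h)
    · by_cases hxb : c u₀ v = c u₀ vB
      · have hall : ∀ u', c u' v = c u₀ vA ∨ c u' v = c u₀ vB := by
          intro u'
          by_cases h' : u' = u₀
          · subst h'; exact Or.inr hxb
          have hvA : v ≠ vA := by
            intro h; rw [h] at hxb; exact hab hxb
          rcases P2 u₀ u' vA v (fun h => h' h.symm) (Ne.symm hvA) with h | h | h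
          · exact absurd (h.trans hxb) hab
          · exact Or.inl h.symm
          · exact Or.inr (h.symm.trans hxb)
        rcases hall u with h | h
        · exact Or.inl h
        · exact Or.inr (Or.inl h)
      · right; right
        have hvA : v ≠ vA := fun h => hxa (by rw [h])
        have hvB : v ≠ vB := fun h => hxb (by rw [h])
        have hall : ∀ u', c u' v = c u₀ v := by
          intro u'
          by_cases h' : u' = u₀
          · subst h'; rfl
          have k1 := P2 u₀ u' vA v (fun h => h' h.symm) (Ne.symm hvA)
          have k2 := P2 u₀ u' vB v (fun h => h' h.symm) (Ne.symm hvB)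
          rcases k1 with h | h | h
          · exact absurd h.symm hxa
          · rcases k2 with h2 | h2 | h2
            · exact absurd h2.symm hxb
            · exact absurd (h.trans h2.symm) hab
            · exact h2.symm
          · exact h.symm
        intro u'
        rw [hall u', hall u]
  have hu12 : u₁ ≠ u₂ := fun h => hy (by rw [h])
  have hc1 : c u₁ v₀ = c u₀ vA ∨ c u₁ v₀ = c u₀ vB := by
    rcases Key v₀ u₁ with h | h | h
    · exact Or.inl h
    · exact Or.inr h
    · exact absurd (h u₂).symm hy
  have hc2 : c u₂ v₀ = c u₀ vA ∨ c u₂ v₀ = c u₀ vB := by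
    rcases Key v₀ u₂ with h | h | h
    · exact Or.inl h
    · exact Or.inr h
    · exact absurd (h u₁) hy
  have hedge : ∀ u v, c u v = c u₀ vA ∨ c u v = c u₀ vB := by
    intro u v
    rcases Key v u with h | h | hconst
    · exact Or.inl h
    · exact Or.inr h
    by_cases hv : v = v₀
    · subst hv
      exact absurd ((hconst u₁).trans (hconst u₂).symm) hy
    rcases P1 u₁ u₂ v₀ v hu12 (Ne.symm hv) with h | h | h
    · exact absurd h hy
    · rw [(hconst u₂).symm, ← h]; exact hc1
    · rw [(hconst u₂).symm, ← h]; exact hc2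
  obtain ⟨x1, y1, hxy1⟩ := e1
  obtain ⟨x2, y2, hxy2⟩ := e2
  obtain ⟨x3, y3, hxy3⟩ := e3
  have g1 := hedge x1 y1
  have g2 := hedge x2 y2
  have g3 := hedge x3 y3
  rw [hxy1] at g1; rw [hxy2] at g2; rw [hxy3] at g3
  rcases g1 with g1 | g1 <;> rcases g2 with g2 | g2 <;> rcases g3 with g3 | g3 <;>
    simp_all

set_option maxHeartbeats 1000000 in
lemma monoRows {k r l N : ℕ} (hk : 3 ≤ k) (hr : 2 ≤ r) (hl : 2 ≤ l)
    (hN : k * (r / 2 + (r + l) / 2) - k + 1 ≤ N)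
    (c : Fin N → Fin N → Fin k)
    (hm : ∀ u v v', c u v = c u v') :
    hasMonoCopy c (pathGraph r ⊕g pathGraph (r + l)) := by
  obtain ⟨a, ha⟩ : ∃ a, a = r / 2 := ⟨_, rfl⟩
  obtain ⟨b, hb⟩ : ∃ b, b = (r + l) / 2 := ⟨_, rfl⟩
  rw [← ha, ← hb] at hN
  have hmul : k * (a + b) = k * (a + b - 1) + k := by
    rw [← Nat.mul_succ]; congr 1; omega
  have h3 : 3 * (a + b - 1) ≤ k * (a + b - 1) := Nat.mul_le_mul_right _ hk
  have hkN : k * (a + b - 1) + 1 ≤ N := by omega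
  have hN' : 3 * (a + b) - 2 ≤ N := by omega
  have hN0 : 0 < N := by omega
  set v0 : Fin N := ⟨0, hN0⟩ with hv0
  obtain ⟨i, -, hi⟩ := Finset.exists_lt_card_fiber_of_mul_lt_card_of_maps_to
    (s := (Finset.univ : Finset (Fin N))) (t := (Finset.univ : Finset (Fin k)))
    (f := fun u => c u v0) (n := a + b - 1) (fun x _ => Finset.mem_univ _)
    (by simpa using hkN)
  have hcard : a + b ≤ (Finset.univ.filter fun x => c x v0 = i).card := by
    have h2 : 1 ≤ a + b := by omega
    omega
  obtain ⟨S, hSsub, hScard⟩ := Finset.exists_subset_card_eq hcard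
  set s := S.orderEmbOfFin hScard with hs
  have hsi : ∀ q (hq : q < a + b) (v : Fin N), c (s ⟨q, hq⟩) v = i := by
    intro q hq v
    have h1 : s ⟨q, hq⟩ ∈ S := S.orderEmbOfFin_mem hScard _
    have h2 := hSsub h1
    rw [Finset.mem_filter] at h2
    rw [hm _ v v0]
    exact h2.2
  have hsinj : ∀ q1 q2 (h1 : q1 < a + b) (h2 : q2 < a + b),
      s ⟨q1, h1⟩ = s ⟨q2, h2⟩ → q1 = q2 := by
    intro q1 q2 h1 h2 h
    have := (S.orderEmbOfFin hScard).injective h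
    simpa using this
  refine ⟨i, fun x => match x with
    | Sum.inl j => if h : j.val % 2 = 1
        then Sum.inl (s ⟨j.val / 2, by have := j.isLt; omega⟩)
        else Sum.inr ⟨j.val / 2, by have := j.isLt; omega⟩
    | Sum.inr j => if h : j.val % 2 = 1
        then Sum.inl (s ⟨a + j.val / 2, by have := j.isLt; omega⟩)
        else Sum.inr ⟨(r - a) + j.val / 2, by have := j.isLt; omega⟩, ?_, ?_⟩
  · intro x y hxy
    rcases x with j | j <;> rcases y with j' | j' <;>
      have hj := j.isLt <;> have hj' := j'.isLt <;>
      dsimp only at hxy <;> split_ifs at hxy with h1 h2 h2 <;>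
      simp only [Sum.inl.injEq, Sum.inr.injEq, Fin.mk.injEq] at hxy
    · exact congrArg Sum.inl (Fin.ext (by have := hsinj _ _ _ _ hxy; omega))
    · exact congrArg Sum.inl (Fin.ext (by omega))
    · exact absurd (hsinj _ _ _ _ hxy) (by omega)
    · exact absurd hxy (by omega)
    · exact absurd (hsinj _ _ _ _ hxy).symm (by omega)
    · exact absurd hxy.symm (by omega)
    · exact congrArg Sum.inr (Fin.ext (by have := hsinj _ _ _ _ hxy; omega))
    · exact congrArg Sum.inr (Fin.ext (by omega))
  · intro x y hxy
    rcases x with j | j <;> rcases y with j' | j'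
    · have hadj : j.val + 1 = j'.val ∨ j'.val + 1 = j.val := pathGraph_adj.mp hxy
      have hj := j.isLt
      have hj' := j'.isLt
      by_cases hpar : j.val % 2 = 1
      · have hpar' : ¬ j'.val % 2 = 1 := by omega
        refine ⟨s ⟨j.val / 2, by omega⟩, ⟨j'.val / 2, by omega⟩, hsi _ _ _,
          Or.inl ⟨?_, ?_⟩⟩
        · dsimp only; rw [dif_pos hpar]
        · dsimp only; rw [dif_neg hpar']
      · have hpar' : j'.val % 2 = 1 := by omega
        refine ⟨s ⟨j'.val / 2, by omega⟩, ⟨j.val / 2, by omega⟩, hsi _ _ _,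
          Or.inr ⟨?_, ?_⟩⟩
        · dsimp only; rw [dif_neg hpar]
        · dsimp only; rw [dif_pos hpar']
    · exact absurd hxy (by simp [SimpleGraph.sum_adj])
    · exact absurd hxy (by simp [SimpleGraph.sum_adj])
    · have hadj : j.val + 1 = j'.val ∨ j'.val + 1 = j.val := pathGraph_adj.mp hxy
      have hj := j.isLt
      have hj' := j'.isLt
      by_cases hpar : j.val % 2 = 1
      · have hpar' : ¬ j'.val % 2 = 1 := by omega
        refine ⟨s ⟨a + j.val / 2, by omega⟩, ⟨(r - a) + j'.val / 2, by omega⟩,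
          hsi _ _ _, Or.inl ⟨?_, ?_⟩⟩
        · dsimp only; rw [dif_pos hpar]
        · dsimp only; rw [dif_neg hpar']
      · have hpar' : j'.val % 2 = 1 := by omega
        refine ⟨s ⟨a + j'.val / 2, by omega⟩, ⟨(r - a) + j.val / 2, by omega⟩,
          hsi _ _ _, Or.inr ⟨?_, ?_⟩⟩
        · dsimp only; rw [dif_neg hpar]
        · dsimp only; rw [dif_pos hpar']

lemma monoFlip {N : ℕ} {γ α : Type*} (c : Fin N → Fin N → γ) (H : SimpleGraph α) :
    hasMonoCopy (fun v u => c u v) H → hasMonoCopy c H := by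
  rintro ⟨i, f, hfinj, hf⟩
  have hswap : Function.Injective (Sum.swap : Fin N ⊕ Fin N → Fin N ⊕ Fin N) :=
    Function.LeftInverse.injective Sum.swap_swap
  refine ⟨i, Sum.swap ∘ f, hswap.comp hfinj, ?_⟩
  intro x y hxy
  obtain ⟨u, v, hci, h⟩ := hf x y hxy
  refine ⟨v, u, hci, ?_⟩
  rcases h with ⟨h1, h2⟩ | ⟨h1, h2⟩
  · exact Or.inr ⟨by simp [Function.comp, h1], by simp [Function.comp, h2]⟩
  · exact Or.inl ⟨by simp [Function.comp, h1], by simp [Function.comp, h2]⟩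


/-- for `k ≥ 3`, `r, l ≥ 2` and `N ≥ k(⌊r/2⌋+⌊(r+l)/2⌋) − k + 1`,
every exact `k`-edge-coloring of `K_{N,N}` contains a rainbow `P₄` or a
monochromatic `P_r ∪ P_{r+l}`. -/
theorem stmt5 (k r l N : ℕ) (hk : 3 ≤ k) (hr : 2 ≤ r) (hl : 2 ≤ l)
    (hN : k * (r / 2 + (r + l) / 2) - k + 1 ≤ N)
    (c : Fin N → Fin N → Fin k) (hc : ∀ i : Fin k, ∃ u v, c u v = i) :
    hasRainbowP4 c ∨ hasMonoCopy c (pathGraph r ⊕g pathGraph (r + l)) := by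
  by_cases h4 : hasRainbowP4 c
  · exact Or.inl h4
  right
  have h01 : (⟨0, by omega⟩ : Fin k) ≠ ⟨1, by omega⟩ := by simp [Fin.ext_iff]
  have h02 : (⟨0, by omega⟩ : Fin k) ≠ ⟨2, by omega⟩ := by simp [Fin.ext_iff]
  have h12 : (⟨1, by omega⟩ : Fin k) ≠ ⟨2, by omega⟩ := by simp [Fin.ext_iff]
  rcases dichotomy c h4 _ _ _ h01 h02 h12 (hc _) (hc _) (hc _) with hrow | hcol
  · exact monoRows hk hr hl hN c hrow
  · exact monoFlip c _ (monoRows hk hr hl hN (fun v u => c u v)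
      (fun u v v' => hcol u v v'))
end

section
/- For integers k ≥ 3, m ≥ 2, l ≥ 2, bgr_k(P_4 : P_m ∪ C_{2l}) = k(l + ⌊m/2⌋) − k + 1. -/
open Function Finset SimpleGraph

/-- `n` witnesses the bipartite Gallai–Ramsey property for a rainbow `P₄`
versus a monochromatic `P_m ∪ C_{2l}` with `k` colors. -/
def bgrP4PC (k m l n : ℕ) : Prop :=
  k ≤ n ^ 2 ∧ ∀ N : ℕ, n ≤ N → ∀ c : Fin N → Fin N → Fin k,
    (∀ i : Fin k, ∃ u v, c u v = i) →
    hasRainbowP4 c ∨ hasMonoCopy c (pathGraph m ⊕g cycleGraph (2 * l))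

lemma noRB_left {N : ℕ} {γ : Type*} {c : Fin N → Fin N → γ} (h : ¬ hasRainbowP4 c)
    (u₁ u₂ v₁ v₂ : Fin N) (hne : c u₂ v₁ ≠ c u₂ v₂) :
    c u₁ v₁ = c u₂ v₁ ∨ c u₁ v₁ = c u₂ v₂ := by
  by_contra hcon
  push_neg at hcon
  have hv : v₁ ≠ v₂ := fun h' => hne (by rw [h'])
  have hu : u₁ ≠ u₂ := fun h' => hcon.1 (by rw [h'])
  exact h (Or.inl ⟨u₁, u₂, v₁, v₂, hu, hv, hcon.1, hcon.2, hne⟩)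

lemma noRB_right {N : ℕ} {γ : Type*} {c : Fin N → Fin N → γ} (h : ¬ hasRainbowP4 c)
    (u₁ u₂ v₁ v₂ : Fin N) (hne : c u₁ v₂ ≠ c u₂ v₂) :
    c u₁ v₁ = c u₁ v₂ ∨ c u₁ v₁ = c u₂ v₂ := by
  by_contra hcon
  push_neg at hcon
  have hv : v₁ ≠ v₂ := fun h' => hcon.1 (by rw [h'])
  have hu : u₁ ≠ u₂ := fun h' => hne (by rw [h'])
  exact h (Or.inr ⟨v₁, v₂, u₁, u₂, hv, hu, hcon.1, hcon.2, hne⟩)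

/-- Structure theorem: with ≥ 3 colors and no rainbow P4, the coloring is
constant on columns or constant on rows. -/
lemma structthm {N k : ℕ} (hk : 3 ≤ k) (c : Fin N → Fin N → Fin k)
    (hsurj : ∀ i : Fin k, ∃ u v, c u v = i) (hno : ¬ hasRainbowP4 c) :
    (∀ u u' v, c u v = c u' v) ∨ (∀ u v v', c u v = c u v') := by
  by_cases hA : ∃ u v₁ v₂ v₃ : Fin N, c u v₁ ≠ c u v₂ ∧ c u v₁ ≠ c u v₃ ∧ c u v₂ ≠ c u v₃
  · obtain ⟨u, v₁, v₂, v₃, h12, h13, h23⟩ := hA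
    left
    have key : ∀ u' v, c u' v = c u v := by
      intro u' v
      obtain ⟨a, b, ha, hb, hab⟩ : ∃ a b : Fin N, c u a ≠ c u v ∧ c u b ≠ c u v ∧ c u a ≠ c u b := by
        by_cases e1 : c u v₁ = c u v
        · exact ⟨v₂, v₃, fun h => h12 (e1.trans h.symm), fun h => h13 (e1.trans h.symm), h23⟩
        · by_cases e2 : c u v₂ = c u v
          · exact ⟨v₁, v₃, e1, fun h => h23 (e2.trans h.symm), h13⟩
          · exact ⟨v₁, v₂, e1, e2, h12⟩
      rcases noRB_left hno u' u v a (Ne.symm ha) with r1 | r1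
      · exact r1
      · rcases noRB_left hno u' u v b (Ne.symm hb) with r2 | r2
        · exact r2
        · exact absurd (r1.symm.trans r2) hab
    intro ua ub v
    rw [key ua v, key ub v]
  · by_cases hB : ∃ v u₁ u₂ u₃ : Fin N, c u₁ v ≠ c u₂ v ∧ c u₁ v ≠ c u₃ v ∧ c u₂ v ≠ c u₃ v
    · obtain ⟨v, u₁, u₂, u₃, h12, h13, h23⟩ := hB
      right
      have key : ∀ u v', c u v' = c u v := by
        intro u v'
        obtain ⟨a, b, ha, hb, hab⟩ : ∃ a b : Fin N, c a v ≠ c u v ∧ c b v ≠ c u v ∧ c a v ≠ c b v := by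
          by_cases e1 : c u₁ v = c u v
          · exact ⟨u₂, u₃, fun h => h12 (e1.trans h.symm), fun h => h13 (e1.trans h.symm), h23⟩
          · by_cases e2 : c u₂ v = c u v
            · exact ⟨u₁, u₃, e1, fun h => h23 (e2.trans h.symm), h13⟩
            · exact ⟨u₁, u₂, e1, e2, h12⟩
        rcases noRB_right hno u a v' v (Ne.symm ha) with r1 | r1
        · exact r1
        · rcases noRB_right hno u b v' v (Ne.symm hb) with r2 | r2
          · exact r2
          · exact absurd (r1.symm.trans r2) hab
      intro u va vb
      rw [key u va, key u vb]
    · exfalso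
      push_neg at hA hB
      obtain ⟨x0, y0, e0⟩ := hsurj ⟨0, by omega⟩
      obtain ⟨x1, y1, e1⟩ := hsurj ⟨1, by omega⟩
      obtain ⟨x2, y2, e2⟩ := hsurj ⟨2, by omega⟩
      by_cases h2 : ∃ u v v', c u v ≠ c u v'
      · obtain ⟨u, v, v', hne⟩ := h2
        have claim : ∀ u' w, c u' w = c u v ∨ c u' w = c u v' := by
          intro u' w
          have hw : c u w = c u v ∨ c u w = c u v' := by
            rcases eq_or_ne (c u w) (c u v) with h | h
            · exact Or.inl h
            · rcases eq_or_ne (c u w) (c u v') with h' | h'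
              · exact Or.inr h'
              · exact absurd (hA u w v v' h h') hne
          rcases hw with hw | hw
          · have hx : c u w ≠ c u v' := fun h => hne (hw.symm.trans h)
            rcases noRB_left hno u' u w v' hx with r | r
            · exact Or.inl (r.trans hw)
            · exact Or.inr r
          · have hx : c u w ≠ c u v := fun h => hne (h.symm.trans hw)
            rcases noRB_left hno u' u w v hx with r | r
            · exact Or.inr (r.trans hw)
            · exact Or.inl r
        have c0 := claim x0 y0; rw [e0] at c0
        have c1 := claim x1 y1; rw [e1] at c1
        have c2 := claim x2 y2; rw [e2] at c2
        rcases c0 with h0 | h0 <;> rcases c1 with h1 | h1 <;> rcases c2 with h2' | h2' <;>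
          first
            | exact absurd (h0.trans h1.symm) (by simp [Fin.ext_iff])
            | exact absurd (h0.trans h2'.symm) (by simp [Fin.ext_iff])
            | exact absurd (h1.trans h2'.symm) (by simp [Fin.ext_iff])
      · push_neg at h2
        by_cases h3 : ∃ v u u', c u v ≠ c u' v
        · obtain ⟨v, u, u', hne⟩ := h3
          have claim : ∀ u₀ w, c u₀ w = c u v ∨ c u₀ w = c u' v := by
            intro u₀ w
            have hw : c u₀ v = c u v ∨ c u₀ v = c u' v := by
              rcases eq_or_ne (c u₀ v) (c u v) with h | h
              · exact Or.inl h
              · rcases eq_or_ne (c u₀ v) (c u' v) with h' | h'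
                · exact Or.inr h'
                · exact absurd (hB v u₀ u u' h h') hne
            rcases hw with hw | hw
            · have hx : c u₀ v ≠ c u' v := fun h => hne (hw.symm.trans h)
              rcases noRB_right hno u₀ u' w v hx with r | r
              · exact Or.inl (r.trans hw)
              · exact Or.inr r
            · have hx : c u₀ v ≠ c u v := fun h => hne (h.symm.trans hw)
              rcases noRB_right hno u₀ u w v hx with r | r
              · exact Or.inr (r.trans hw)
              · exact Or.inl r
          have c0 := claim x0 y0; rw [e0] at c0
          have c1 := claim x1 y1; rw [e1] at c1
          have c2 := claim x2 y2; rw [e2] at c2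
          rcases c0 with h0 | h0 <;> rcases c1 with h1 | h1 <;> rcases c2 with h2' | h2' <;>
            first
              | exact absurd (h0.trans h1.symm) (by simp [Fin.ext_iff])
              | exact absurd (h0.trans h2'.symm) (by simp [Fin.ext_iff])
              | exact absurd (h1.trans h2'.symm) (by simp [Fin.ext_iff])
        · push_neg at h3
          have : c x0 y0 = c x1 y1 := by
            rw [h2 x0 y0 y1, h3 y1 x0 x1]
          rw [e0, e1] at this
          simp [Fin.ext_iff] at this

/-- Embedding lemma: a color `i` occupying `m/2 + l` full columns contains
`P_m ∪ C_{2l}` monochromatically, provided there are enough rows. -/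
lemma embedCol {N k m l : ℕ} (hm : 2 ≤ m) (hl : 2 ≤ l)
    (c : Fin N → Fin N → Fin k) (i : Fin k)
    (hN : (m + 1) / 2 + l ≤ N)
    (e : Fin (m / 2 + l) → Fin N) (he : Function.Injective e)
    (hce : ∀ u t, c u (e t) = i) :
    hasMonoCopy c (pathGraph m ⊕g cycleGraph (2 * l)) := by
  refine ⟨i, Sum.elim
      (fun j => if h : j.val % 2 = 0
        then Sum.inl ⟨j.val / 2, by have := j.2; omega⟩
        else Sum.inr (e ⟨j.val / 2, by have := j.2; omega⟩))
      (fun j => if h : j.val % 2 = 0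
        then Sum.inl ⟨(m + 1) / 2 + j.val / 2, by have := j.2; omega⟩
        else Sum.inr (e ⟨m / 2 + j.val / 2, by have := j.2; omega⟩)), ?_, ?_⟩
  · rintro (a | a) (b | b) hab <;>
      simp only [Sum.elim_inl, Sum.elim_inr] at hab <;>
      split_ifs at hab with h1 h2 <;>
      simp only [Sum.inl.injEq, Sum.inr.injEq, Fin.mk.injEq] at hab
    · exact congrArg Sum.inl (Fin.ext (by omega))
    · exact congrArg Sum.inl (Fin.ext (by have := he hab; simp [Fin.mk.injEq] at this; omega))
    · exact absurd (by have := a.2; omega : False) not_false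
    · exact absurd (by have := he hab; simp [Fin.mk.injEq] at this; have := a.2; omega : False) not_false
    · exact absurd (by omega : False) not_false
    · exact absurd (by have := he hab; simp [Fin.mk.injEq] at this; have := b.2; omega : False) not_false
    · exact congrArg Sum.inr (Fin.ext (by omega))
    · exact congrArg Sum.inr (Fin.ext (by have := he hab; simp [Fin.mk.injEq] at this; omega))
  · have parstep : ∀ x y : ℕ, x < 2 * l → y < 2 * l →
        (2 * l - y + x) % (2 * l) = 1 → x % 2 ≠ y % 2 := by
      intro x y hx hy hmod
      rcases Nat.lt_or_ge (2 * l - y + x) (2 * l) with h | h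
      · rw [Nat.mod_eq_of_lt h] at hmod; omega
      · rw [Nat.mod_eq_sub_mod h, Nat.mod_eq_of_lt (by omega)] at hmod; omega
    rintro (a | a) (b | b) hab
    · -- path edge
      have h' : (pathGraph m).Adj a b := hab
      rw [pathGraph_adj] at h'
      rcases Nat.even_or_odd a.val with hpa | hpa
      · have ha0 : a.val % 2 = 0 := Nat.even_iff.mp hpa
        have hb1 : ¬ b.val % 2 = 0 := by omega
        refine ⟨⟨a.val / 2, by have := a.2; omega⟩, e ⟨b.val / 2, by have := b.2; omega⟩,
          hce _ _, Or.inl ⟨?_, ?_⟩⟩ <;> simp [ha0, hb1]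
      · have ha0 : ¬ a.val % 2 = 0 := by have := Nat.odd_iff.mp hpa; omega
        have hb1 : b.val % 2 = 0 := by have := Nat.odd_iff.mp hpa; omega
        refine ⟨⟨b.val / 2, by have := b.2; omega⟩, e ⟨a.val / 2, by have := a.2; omega⟩,
          hce _ _, Or.inr ⟨?_, ?_⟩⟩ <;> simp [ha0, hb1]
    · exact absurd hab (by simp)
    · exact absurd hab (by simp)
    · -- cycle edge
      have h' : (cycleGraph (2 * l)).Adj a b := hab
      rw [cycleGraph_adj'] at h'
      have hpar : a.val % 2 ≠ b.val % 2 := by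
        rcases h' with h' | h'
        · rw [Fin.sub_def] at h'
          exact fun hh => (parstep a.val b.val a.2 b.2 h') hh
        · rw [Fin.sub_def] at h'
          exact fun hh => (parstep b.val a.val b.2 a.2 h') hh.symm
      rcases Nat.even_or_odd a.val with hpa | hpa
      · have ha0 : a.val % 2 = 0 := Nat.even_iff.mp hpa
        have hb1 : ¬ b.val % 2 = 0 := by omega
        refine ⟨⟨(m + 1) / 2 + a.val / 2, by have := a.2; omega⟩,
          e ⟨m / 2 + b.val / 2, by have := b.2; omega⟩, hce _ _, Or.inl ⟨?_, ?_⟩⟩ <;>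
          simp [ha0, hb1]
      · have ha0 : ¬ a.val % 2 = 0 := by have := Nat.odd_iff.mp hpa; omega
        have hb1 : b.val % 2 = 0 := by have := Nat.odd_iff.mp hpa; omega
        refine ⟨⟨(m + 1) / 2 + b.val / 2, by have := b.2; omega⟩,
          e ⟨m / 2 + a.val / 2, by have := a.2; omega⟩, hce _ _, Or.inr ⟨?_, ?_⟩⟩ <;>
          simp [ha0, hb1]

lemma monoSwap {N : ℕ} {γ α : Type*} {c : Fin N → Fin N → γ} {H : SimpleGraph α}
    (h : hasMonoCopy (fun v u => c u v) H) : hasMonoCopy c H := by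
  obtain ⟨i, f, hinj, hadj⟩ := h
  refine ⟨i, Sum.swap ∘ f, fun x y hxy => hinj (by
    have := congrArg Sum.swap hxy
    simpa using this), ?_⟩
  intro a b hab
  obtain ⟨u, v, hc, hor⟩ := hadj a b hab
  refine ⟨v, u, hc, ?_⟩
  rcases hor with ⟨ha, hb⟩ | ⟨ha, hb⟩
  · exact Or.inr ⟨by simp [Function.comp, ha], by simp [Function.comp, hb]⟩
  · exact Or.inl ⟨by simp [Function.comp, ha], by simp [Function.comp, hb]⟩

lemma upperBound {k m l : ℕ} (hk : 3 ≤ k) (hm : 2 ≤ m) (hl : 2 ≤ l)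
    (N : ℕ) (hN : k * (l + m / 2 - 1) + 1 ≤ N) (c : Fin N → Fin N → Fin k)
    (hsurj : ∀ i : Fin k, ∃ u v, c u v = i) :
    hasRainbowP4 c ∨ hasMonoCopy c (pathGraph m ⊕g cycleGraph (2 * l)) := by
  by_cases hr : hasRainbowP4 c
  · exact Or.inl hr
  right
  have hs3 : 3 ≤ l + m / 2 := by omega
  have hkmul : 3 * (l + m / 2 - 1) ≤ k * (l + m / 2 - 1) :=
    Nat.mul_le_mul_right _ hk
  have hNbig : (m + 1) / 2 + l ≤ N := by omega
  have hN0 : 0 < N := by omega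
  rcases structthm hk c hsurj hr with hcol | hrow
  · -- columns constant
    set g : Fin N → Fin k := fun v => c ⟨0, hN0⟩ v with hg
    obtain ⟨i, -, hi⟩ := Finset.exists_lt_card_fiber_of_mul_lt_card_of_maps_to
      (s := (Finset.univ : Finset (Fin N))) (t := (Finset.univ : Finset (Fin k)))
      (f := g) (n := l + m / 2 - 1) (fun a _ => Finset.mem_univ _)
      (by simpa using by omega)
    obtain ⟨T, hTsub, hTcard⟩ := Finset.exists_subset_card_eq
      (n := m / 2 + l) (by omega : m / 2 + l ≤ (Finset.univ.filter fun x => g x = i).card)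
    have hmem : ∀ t : Fin (m / 2 + l), g (T.orderEmbOfFin hTcard t) = i := by
      intro t
      have := hTsub (T.orderEmbOfFin_mem hTcard t)
      simpa using this
    exact embedCol hm hl c i hNbig (T.orderEmbOfFin hTcard)
      (T.orderEmbOfFin hTcard).injective
      (fun u t => (hcol u ⟨0, hN0⟩ _).trans (hmem t))
  · -- rows constant: swap sides
    apply monoSwap
    set c' : Fin N → Fin N → Fin k := fun v u => c u v with hc'
    set g : Fin N → Fin k := fun u => c u ⟨0, hN0⟩ with hg
    obtain ⟨i, -, hi⟩ := Finset.exists_lt_card_fiber_of_mul_lt_card_of_maps_to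
      (s := (Finset.univ : Finset (Fin N))) (t := (Finset.univ : Finset (Fin k)))
      (f := g) (n := l + m / 2 - 1) (fun a _ => Finset.mem_univ _)
      (by simpa using by omega)
    obtain ⟨T, hTsub, hTcard⟩ := Finset.exists_subset_card_eq
      (n := m / 2 + l) (by omega : m / 2 + l ≤ (Finset.univ.filter fun x => g x = i).card)
    have hmem : ∀ t : Fin (m / 2 + l), g (T.orderEmbOfFin hTcard t) = i := by
      intro t
      have := hTsub (T.orderEmbOfFin_mem hTcard t)
      simpa using this
    exact embedCol hm hl c' i hNbig (T.orderEmbOfFin hTcard)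
      (T.orderEmbOfFin hTcard).injective
      (fun u t => (hrow _ u ⟨0, hN0⟩).trans (hmem t))

lemma altLogic (X Y G P Q : Prop) (h1 : X ↔ ¬ Y) (h2 : X ↔ (P ↔ G)) (h3 : Q ↔ ¬ P) :
    Y ↔ (Q ↔ G) := by tauto

/-- No monochromatic `P_m ∪ C_{2l}` in the block-column coloring with blocks of
width `t = l + m/2 - 1`. -/
lemma noMono {k m l t N : ℕ} (hm : 2 ≤ m) (hl : 2 ≤ l) (ht : t = l + m / 2 - 1)
    (c : Fin N → Fin N → Fin k) (hc : ∀ u v, (c u v).val = v.val / t) :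
    ¬ hasMonoCopy c (pathGraph m ⊕g cycleGraph (2 * l)) := by
  rintro ⟨i, f, hinj, hadj⟩
  have ht2 : 2 ≤ t := by omega
  have h0m : 0 < m := by omega
  have h0l : 0 < 2 * l := by omega
  -- alternation of sides along edges
  have edgeAlt : ∀ a b, (pathGraph m ⊕g cycleGraph (2 * l)).Adj a b →
      ((∃ v : Fin N, f a = Sum.inr v ∧ v.val / t = i.val) ↔
        ¬ (∃ v : Fin N, f b = Sum.inr v ∧ v.val / t = i.val)) := by
    intro a b hab
    obtain ⟨u, v, hcuv, hor⟩ := hadj a b hab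
    have hval : v.val / t = i.val := by rw [← hc u v, hcuv]
    rcases hor with ⟨ha, hb⟩ | ⟨ha, hb⟩
    · refine iff_of_false ?_ (not_not_intro ⟨v, hb, hval⟩)
      rintro ⟨v', hv', -⟩
      rw [ha] at hv'
      exact absurd hv' (by simp)
    · refine iff_of_true ⟨v, ha, hval⟩ ?_
      rintro ⟨v', hv', -⟩
      rw [hb] at hv'
      exact absurd hv' (by simp)
  have pathPar : ∀ j : ℕ, ∀ hj : j < m,
      ((∃ v : Fin N, f (Sum.inl ⟨j, hj⟩) = Sum.inr v ∧ v.val / t = i.val) ↔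
        (j % 2 = 0 ↔ ∃ v : Fin N, f (Sum.inl ⟨0, h0m⟩) = Sum.inr v ∧ v.val / t = i.val)) := by
    intro j
    induction j with
    | zero => intro hj; simp
    | succ n ih =>
      intro hj
      have hn : n < m := by omega
      have hprev := ih hn
      have hadj' : (pathGraph m ⊕g cycleGraph (2 * l)).Adj
          (Sum.inl ⟨n, hn⟩) (Sum.inl ⟨n + 1, hj⟩) := pathGraph_adj.mpr (Or.inl rfl)
      have halt := edgeAlt _ _ hadj'
      have hpar : ((n + 1) % 2 = 0) ↔ ¬ (n % 2 = 0) := by omega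
      exact altLogic _ _ _ _ _ halt hprev hpar
  have cyclePar : ∀ j : ℕ, ∀ hj : j < 2 * l,
      ((∃ v : Fin N, f (Sum.inr ⟨j, hj⟩) = Sum.inr v ∧ v.val / t = i.val) ↔
        (j % 2 = 0 ↔ ∃ v : Fin N, f (Sum.inr ⟨0, h0l⟩) = Sum.inr v ∧ v.val / t = i.val)) := by
    intro j
    induction j with
    | zero => intro hj; simp
    | succ n ih =>
      intro hj
      have hn : n < 2 * l := by omega
      have hprev := ih hn
      have hadj' : (pathGraph m ⊕g cycleGraph (2 * l)).Adj
          (Sum.inr ⟨n, hn⟩) (Sum.inr ⟨n + 1, hj⟩) := by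
        show (cycleGraph (2 * l)).Adj _ _
        rw [cycleGraph_adj']
        right
        rw [Fin.sub_def]
        show (2 * l - n + (n + 1)) % (2 * l) = 1
        have e1 : 2 * l - n + (n + 1) = 2 * l + 1 := by omega
        rw [e1, Nat.mod_eq_sub_mod (by omega), Nat.mod_eq_of_lt (by omega)]
        omega
      have halt := edgeAlt _ _ hadj'
      have hpar : ((n + 1) % 2 = 0) ↔ ¬ (n % 2 = 0) := by omega
      exact altLogic _ _ _ _ _ halt hprev hpar
  -- choose the parity bit of the `inr` side on each component
  obtain ⟨bp, hbp, hgp⟩ : ∃ bp, bp ≤ 1 ∧ ∀ j (hj : j < m), j % 2 = bp →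
      ∃ v : Fin N, f (Sum.inl ⟨j, hj⟩) = Sum.inr v ∧ v.val / t = i.val := by
    by_cases hp0 : ∃ v : Fin N, f (Sum.inl ⟨0, h0m⟩) = Sum.inr v ∧ v.val / t = i.val
    · exact ⟨0, by omega, fun j hj hp => (pathPar j hj).mpr ⟨fun _ => hp0, fun _ => hp⟩⟩
    · exact ⟨1, le_refl 1, fun j hj hp => (pathPar j hj).mpr
        ⟨fun h => absurd h (by omega), fun h => absurd h hp0⟩⟩
  obtain ⟨bc, hbc, hgc⟩ : ∃ bc, bc ≤ 1 ∧ ∀ j (hj : j < 2 * l), j % 2 = bc →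
      ∃ v : Fin N, f (Sum.inr ⟨j, hj⟩) = Sum.inr v ∧ v.val / t = i.val := by
    by_cases hp0 : ∃ v : Fin N, f (Sum.inr ⟨0, h0l⟩) = Sum.inr v ∧ v.val / t = i.val
    · exact ⟨0, by omega, fun j hj hp => (cyclePar j hj).mpr ⟨fun _ => hp0, fun _ => hp⟩⟩
    · exact ⟨1, le_refl 1, fun j hj hp => (cyclePar j hj).mpr
        ⟨fun h => absurd h (by omega), fun h => absurd h hp0⟩⟩
  -- the s = l + m/2 vertices forced on the inr side, inside one block of width t
  set A : Fin (l + m / 2) → Fin m ⊕ Fin (2 * l) := fun r =>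
    if h : r.val < m / 2
      then Sum.inl ⟨2 * r.val + bp, by omega⟩
      else Sum.inr ⟨2 * (r.val - m / 2) + bc, by have := r.2; omega⟩ with hA
  have hAinj : Function.Injective A := by
    intro r r' h
    rw [hA] at h
    dsimp only at h
    split_ifs at h with h1 h2 <;> simp only [Sum.inl.injEq, Sum.inr.injEq, Fin.mk.injEq,
      reduceCtorEq] at h <;> exact Fin.ext (by omega)
  have hgood : ∀ r, ∃ v : Fin N, f (A r) = Sum.inr v ∧ v.val / t = i.val := by
    intro r
    rw [hA]
    dsimp only
    split_ifs with h
    · exact hgp _ _ (by omega)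
    · exact hgc _ _ (by omega)
  choose V hV1 hV2 using hgood
  have hVinj : Function.Injective V := by
    intro r r' h
    apply hAinj
    apply hinj
    rw [hV1 r, hV1 r', h]
  have sub_lt : ∀ x q tt : ℕ, q ≤ x → x < q + tt → x - q < tt := by intro x q tt h1 h2; omega
  have sub_inj : ∀ x y q : ℕ, q ≤ x → q ≤ y → x - q = y - q → x = y := by
    intro x y q h1 h2 h3; omega
  have hb1 : ∀ r, i.val * t ≤ (V r).val ∧ (V r).val < i.val * t + t := by
    intro r
    have h2 := hV2 r
    constructor
    · calc i.val * t = ((V r).val / t) * t := by rw [h2]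
        _ ≤ (V r).val := Nat.div_mul_le_self _ _
    · have hlt : (V r).val / t < i.val + 1 := by omega
      have := (Nat.div_lt_iff_lt_mul (by omega : 0 < t)).mp hlt
      calc (V r).val < (i.val + 1) * t := this
        _ = i.val * t + t := by ring
  have hW : (l + m / 2 : ℕ) ≤ t := by
    have hWinj : Function.Injective
        (fun r : Fin (l + m / 2) =>
          (⟨(V r).val - i.val * t, sub_lt _ _ _ (hb1 r).1 (hb1 r).2⟩ : Fin t)) := by
      intro r r' h
      rw [Fin.mk.injEq] at h
      exact hVinj (Fin.ext (sub_inj _ _ _ (hb1 r).1 (hb1 r').1 h))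
    simpa using Fintype.card_le_of_injective _ hWinj
  omega

lemma mainthm (k m l : ℕ) (hk : 3 ≤ k) (hm : 2 ≤ m) (hl : 2 ≤ l) :
    (k ≤ (k * (l + m / 2) - k + 1) ^ 2 ∧ ∀ N : ℕ, (k * (l + m / 2) - k + 1) ≤ N →
      ∀ c : Fin N → Fin N → Fin k, (∀ i : Fin k, ∃ u v, c u v = i) →
      hasRainbowP4 c ∨ hasMonoCopy c (pathGraph m ⊕g cycleGraph (2 * l))) ∧
    (∀ n : ℕ, (k ≤ n ^ 2 ∧ ∀ N : ℕ, n ≤ N → ∀ c : Fin N → Fin N → Fin k,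
      (∀ i : Fin k, ∃ u v, c u v = i) →
      hasRainbowP4 c ∨ hasMonoCopy c (pathGraph m ⊕g cycleGraph (2 * l))) →
      k * (l + m / 2) - k + 1 ≤ n) := by
  have hs3 : 3 ≤ l + m / 2 := by omega
  have heq : k * (l + m / 2) - k + 1 = k * (l + m / 2 - 1) + 1 := by
    have h1 : k * (l + m / 2) = k * (l + m / 2 - 1) + k := by
      have h2 : l + m / 2 - 1 + 1 = l + m / 2 := by omega
      calc k * (l + m / 2) = k * (l + m / 2 - 1 + 1) := by rw [h2]
        _ = k * (l + m / 2 - 1) + k := by rw [Nat.mul_add, Nat.mul_one]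
    omega
  rw [heq]
  set t := l + m / 2 - 1 with htdef
  have ht2 : 2 ≤ t := by omega
  have hkt : 2 * 2 ≤ k * t := Nat.mul_le_mul (by omega) ht2
  constructor
  · constructor
    · have h1 : k * 1 ≤ k * t := Nat.mul_le_mul_left k (by omega)
      have h2 : k ≤ k * t + 1 := by omega
      calc k ≤ k * t + 1 := h2
        _ ≤ (k * t + 1) ^ 2 := Nat.le_self_pow two_ne_zero _
    · intro N hN c hsurj
      exact upperBound hk hm hl N hN c hsurj
  · intro n hb
    by_contra hlt
    push_neg at hlt
    -- build the extremal coloring on K_{kt,kt}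
    set N := k * t with hNdef
    have htpos : 0 < t := by omega
    set c : Fin N → Fin N → Fin k := fun _ v =>
      ⟨v.val / t, by
        have hv := v.2
        exact (Nat.div_lt_iff_lt_mul htpos).mpr hv⟩ with hcdef
    have hsurj : ∀ i : Fin k, ∃ u v, c u v = i := by
      intro i
      have hlt1 : i.val * t < N := by
        calc i.val * t < k * t := by
              exact (Nat.mul_lt_mul_right htpos).mpr i.2
          _ = N := rfl
      refine ⟨⟨0, by omega⟩, ⟨i.val * t, hlt1⟩, ?_⟩
      apply Fin.ext
      show (i.val * t) / t = i.val
      exact Nat.mul_div_cancel _ htpos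
    have hnorb : ¬ hasRainbowP4 c := by
      rintro (⟨u₁, u₂, v₁, v₂, -, -, h3, -, -⟩ | ⟨a₁, a₂, b₁, b₂, -, -, -, -, h5⟩)
      · exact h3 rfl
      · exact h5 rfl
    have hnomono : ¬ hasMonoCopy c (pathGraph m ⊕g cycleGraph (2 * l)) :=
      noMono hm hl htdef c (fun u v => rfl)
    rcases hb.2 N (by omega) c hsurj with h | h
    · exact hnorb h
    · exact hnomono h

/-- for `k ≥ 3`, `m, l ≥ 2`,
`bgr_k(P₄ : P_m ∪ C_{2l}) = k(l + ⌊m/2⌋) − k + 1`. -/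
theorem stmt7 (k m l : ℕ) (hk : 3 ≤ k) (hm : 2 ≤ m) (hl : 2 ≤ l) :
    bgrP4PC k m l (k * (l + m / 2) - k + 1) ∧
    (∀ n : ℕ, bgrP4PC k m l n → k * (l + m / 2) - k + 1 ≤ n) := mainthm k m l hk hm hl
end

section
/- For integers 2 ≤ s < t with t ≥ 5 and t + s − ⌊t/2⌋ ≤ k ≤ t + s, bgr_k(K_{1,3} : K_{s,t}) = t + s. -/
open Function Finset SimpleGraph

/-- `n` witnesses the bipartite Gallai–Ramsey property for a rainbow `K_{1,3}`
versus a monochromatic `K_{s,t}` with `k` colors. -/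
def bgrK13Kst (k s t n : ℕ) : Prop :=
  k ≤ n ^ 2 ∧ ∀ N : ℕ, n ≤ N → ∀ c : Fin N → Fin N → Fin k,
    (∀ i : Fin k, ∃ u v, c u v = i) →
    hasRainbowK13 c ∨ hasMonoKst c s t


/-- Core arithmetic endgame lemma. -/
lemma coreArith (s t N b2 c3 w2 g d : ℕ)
    (hs : 3 ≤ s) (hst : s < t) (ht : 5 ≤ t) (hN : s + t ≤ N)
    (hd : d ≤ s - 1) (hc3 : c3 ≤ 1) (hw2 : w2 ≤ 1) (hg : g ≤ 1)
    (hodd : t % 2 = 1 → g = 0 ∧ c3 = 0 ∧ w2 = 0)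
    (hgc : g = 1 → c3 = 0)
    (hsum : 2*b2 + 2*w2 + 3*c3 + d + g = N)
    (hcount : b2 + w2 + c3 + d = s + (t - t/2) - 1) :
    ∃ j e i, j ≤ b2 ∧ e ≤ c3 ∧ i ≤ d ∧ t ≤ 2*j + 3*e + i ∧ 2*j + 3*e + i ≤ N - s := by
  rcases Nat.even_or_odd t with hev | hodd'
  · have hte : t % 2 = 0 := Nat.even_iff.mp hev
    by_cases hb : t - t/2 ≤ b2
    · exact ⟨t - t/2, 0, 0, by omega, by omega, by omega, by omega, by omega⟩
    · by_cases hc : c3 = 1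
      · have hg0 : g = 0 := by
          rcases Nat.eq_zero_or_pos g with h0 | h1
          · exact h0
          · exact absurd (hgc (by omega)) (by omega)
        have hd1 : 1 ≤ d := by omega
        exact ⟨t - t/2 - 2, 1, 1, by omega, by omega, by omega, by omega, by omega⟩
      · exact ⟨t - t/2 - 1, 0, 2, by omega, by omega, by omega, by omega, by omega⟩
  · have ht2 : t % 2 = 1 := Nat.odd_iff.mp hodd'
    obtain ⟨hg0, hc30, hw20⟩ := hodd ht2
    rcases Nat.eq_zero_or_pos d with hd0 | hd1
    · exact ⟨t - t/2, 0, 0, by omega, by omega, by omega, by omega, by omega⟩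
    · exact ⟨t - t/2 - 1, 0, 1, by omega, by omega, by omega, by omega, by omega⟩


lemma mem2_eq {α : Type*} [DecidableEq α] {S : Finset α} (h : S.card ≤ 2) {x y a : α}
    (hx : x ∈ S) (hy : y ∈ S) (ha : a ∈ S) (hxa : x ≠ a) (hya : y ≠ a) : x = y := by
  by_contra hxy
  have hsub : ({x, y, a} : Finset α) ⊆ S := by
    intro z hz; simp only [Finset.mem_insert, Finset.mem_singleton] at hz
    rcases hz with rfl|rfl|rfl <;> assumption
  have hcard : ({x, y, a} : Finset α).card = 3 := by
    rw [Finset.card_insert_of_notMem (by simp [hxy, hxa]),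
        Finset.card_insert_of_notMem (by simp [hya]), Finset.card_singleton]
  have := Finset.card_le_card hsub; omega

lemma exists_base {k N : ℕ} (c : Fin N → Fin N → Fin k) (hk : 5 ≤ k) (hN : 1 ≤ N)
    (hsurj : ∀ i, ∃ u v, c u v = i) (hnr : ¬ hasRainbowK13 c) :
    ∃ a : Fin k, (∀ u v₁ v₂, c u v₁ ≠ a → c u v₂ ≠ a → c u v₁ = c u v₂) ∧
                 (∀ v u₁ u₂, c u₁ v ≠ a → c u₂ v ≠ a → c u₁ v = c u₂ v) := by
  have hNe : Nonempty (Fin N) := ⟨⟨0, hN⟩⟩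
  set P : Fin N → Finset (Fin k) := fun u => Finset.image (fun v => c u v) Finset.univ with hP
  set Q : Fin N → Finset (Fin k) := fun v => Finset.image (fun u => c u v) Finset.univ with hQ
  have hmemP : ∀ u v, c u v ∈ P u := fun u v => Finset.mem_image.mpr ⟨v, Finset.mem_univ v, rfl⟩
  have hmemQ : ∀ u v, c u v ∈ Q v := fun u v => Finset.mem_image.mpr ⟨u, Finset.mem_univ u, rfl⟩
  have hP2 : ∀ u, (P u).card ≤ 2 := by
    intro u; by_contra hgt; push_neg at hgt
    obtain ⟨x, y, z, hx, hy, hz, hxy, hxz, hyz⟩ := Finset.two_lt_card_iff.mp hgt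
    obtain ⟨v₁, -, e1⟩ := Finset.mem_image.mp hx
    obtain ⟨v₂, -, e2⟩ := Finset.mem_image.mp hy
    obtain ⟨v₃, -, e3⟩ := Finset.mem_image.mp hz
    exact hnr (Or.inl ⟨u, v₁, v₂, v₃, by rw [e1, e2]; exact hxy, by rw [e1, e3]; exact hxz,
      by rw [e2, e3]; exact hyz⟩)
  have hQ2 : ∀ v, (Q v).card ≤ 2 := by
    intro v; by_contra hgt; push_neg at hgt
    obtain ⟨x, y, z, hx, hy, hz, hxy, hxz, hyz⟩ := Finset.two_lt_card_iff.mp hgt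
    obtain ⟨u₁, -, e1⟩ := Finset.mem_image.mp hx
    obtain ⟨u₂, -, e2⟩ := Finset.mem_image.mp hy
    obtain ⟨u₃, -, e3⟩ := Finset.mem_image.mp hz
    exact hnr (Or.inr ⟨v, u₁, u₂, u₃, by rw [e1, e2]; exact hxy, by rw [e1, e3]; exact hxz,
      by rw [e2, e3]; exact hyz⟩)
  have hkcard : (Finset.univ : Finset (Fin k)).card = k := by simp
  -- L1 : row palettes pairwise intersect
  have L1 : ∀ u₁ u₂, ∃ i, i ∈ P u₁ ∧ i ∈ P u₂ := by
    intro u₁ u₂; by_contra hno; push_neg at hno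
    have huniv : (Finset.univ : Finset (Fin k)) ⊆ P u₁ ∪ P u₂ := by
      intro i _
      obtain ⟨u, v, he⟩ := hsurj i
      have hne : c u₁ v ≠ c u₂ v := by
        intro hcon; exact hno _ (hmemP u₁ v) (hcon ▸ hmemP u₂ v)
      have hpair : ({c u₁ v, c u₂ v} : Finset (Fin k)) ⊆ Q v := by
        intro x hx; simp only [Finset.mem_insert, Finset.mem_singleton] at hx
        rcases hx with rfl|rfl
        · exact hmemQ u₁ v
        · exact hmemQ u₂ v
      have hQeq : ({c u₁ v, c u₂ v} : Finset (Fin k)) = Q v :=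
        Finset.eq_of_subset_of_card_le hpair (le_trans (hQ2 v) (by rw [Finset.card_pair hne]))
      have hcm : c u v ∈ ({c u₁ v, c u₂ v} : Finset (Fin k)) := hQeq ▸ hmemQ u v
      simp only [Finset.mem_insert, Finset.mem_singleton] at hcm
      rcases hcm with hcm|hcm
      · exact Finset.mem_union_left _ (he ▸ hcm ▸ hmemP u₁ v)
      · exact Finset.mem_union_right _ (he ▸ hcm ▸ hmemP u₂ v)
    have h1 := Finset.card_le_card huniv
    have h2 := Finset.card_union_le (P u₁) (P u₂)
    have := hP2 u₁; have := hP2 u₂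
    omega
  -- existence of a common color for rows
  have hex : ∃ a, ∀ u, a ∈ P u := by
    by_contra hno; push_neg at hno
    set u₀ : Fin N := ⟨0, hN⟩ with hu₀
    have hPne : (P u₀).Nonempty := ⟨c u₀ u₀, hmemP u₀ u₀⟩
    obtain ⟨a₁, ha₁⟩ := hPne
    obtain ⟨u₁, hu₁⟩ := hno a₁
    obtain ⟨a₂, ha₂0, ha₂1⟩ := L1 u₀ u₁
    have hne21 : a₁ ≠ a₂ := fun h => hu₁ (h ▸ ha₂1)
    have hPu₀ : P u₀ = {a₁, a₂} :=
      (Finset.eq_of_subset_of_card_le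
        (by intro x hx; simp only [Finset.mem_insert, Finset.mem_singleton] at hx
            rcases hx with rfl|rfl <;> assumption)
        (le_trans (hP2 u₀) (by rw [Finset.card_pair hne21]))).symm
    obtain ⟨u₂, hu₂⟩ := hno a₂
    obtain ⟨i₂, hi₂0, hi₂2⟩ := L1 u₀ u₂
    have hi₂a₁ : i₂ = a₁ := by
      rw [hPu₀] at hi₂0
      simp only [Finset.mem_insert, Finset.mem_singleton] at hi₂0
      rcases hi₂0 with rfl|rfl
      · rfl
      · exact absurd hi₂2 hu₂
    have ha₁2 : a₁ ∈ P u₂ := hi₂a₁ ▸ hi₂2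
    obtain ⟨y, hy1, hy2⟩ := L1 u₁ u₂
    have hyne1 : y ≠ a₁ := fun h => hu₁ (h ▸ hy1)
    have hyne2 : y ≠ a₂ := fun h => hu₂ (h ▸ hy2)
    have hPu₁ : P u₁ = {a₂, y} :=
      (Finset.eq_of_subset_of_card_le
        (by intro x hx; simp only [Finset.mem_insert, Finset.mem_singleton] at hx
            rcases hx with rfl|rfl <;> assumption)
        (le_trans (hP2 u₁) (by rw [Finset.card_pair (Ne.symm hyne2)]))).symm
    have hPu₂ : P u₂ = {a₁, y} :=
      (Finset.eq_of_subset_of_card_le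
        (by intro x hx; simp only [Finset.mem_insert, Finset.mem_singleton] at hx
            rcases hx with rfl|rfl <;> assumption)
        (le_trans (hP2 u₂) (by rw [Finset.card_pair (Ne.symm hyne1)]))).symm
    have htriple : (Finset.univ : Finset (Fin k)) ⊆ {a₁, a₂, y} := by
      intro i _
      by_contra hni
      simp only [Finset.mem_insert, Finset.mem_singleton] at hni
      push_neg at hni
      obtain ⟨hia₁, hia₂, hiy⟩ := hni
      obtain ⟨u, v, he⟩ := hsurj i
      have hiP : i ∈ P u := he ▸ hmemP u v
      obtain ⟨e₀, he₀P, he₀0⟩ := L1 u u₀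
      obtain ⟨e₁, he₁P, he₁1⟩ := L1 u u₁
      obtain ⟨e₂, he₂P, he₂2⟩ := L1 u u₂
      rw [hPu₀] at he₀0; rw [hPu₁] at he₁1; rw [hPu₂] at he₂2
      simp only [Finset.mem_insert, Finset.mem_singleton] at he₀0 he₁1 he₂2
      have hne₀ : e₀ ≠ i := by rintro rfl; rcases he₀0 with rfl|rfl; exact hia₁ rfl; exact hia₂ rfl
      have hne₁ : e₁ ≠ i := by rintro rfl; rcases he₁1 with rfl|rfl; exact hia₂ rfl; exact hiy rfl
      have hne₂ : e₂ ≠ i := by rintro rfl; rcases he₂2 with rfl|rfl; exact hia₁ rfl; exact hiy rfl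
      have h01 : e₀ = e₁ := mem2_eq (hP2 u) he₀P he₁P hiP hne₀ hne₁
      have h02 : e₀ = e₂ := mem2_eq (hP2 u) he₀P he₂P hiP hne₀ hne₂
      rcases he₀0 with h0|h0
      · rcases he₁1 with h1'|h1'
        · exact hne21 (by rw [← h0, ← h1']; exact h01)
        · exact hyne1 (by rw [← h1', ← h0]; exact h01.symm)
      · rcases he₂2 with h2'|h2'
        · exact hne21 (by rw [← h2', ← h0]; exact h02.symm)
        · exact hyne2 (by rw [← h2', ← h0]; exact h02.symm)
    have h1 := Finset.card_le_card htriple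
    have h3 : ({a₁, a₂, y} : Finset (Fin k)).card ≤ 3 := by
      apply le_trans (Finset.card_insert_le _ _)
      have := Finset.card_insert_le a₂ ({y} : Finset (Fin k))
      simp at this ⊢; omega
    omega
  obtain ⟨a, haP⟩ := hex
  -- a is also in all column palettes
  have haQ : ∀ v, a ∈ Q v := by
    by_contra hno; push_neg at hno
    obtain ⟨v₀, hv₀⟩ := hno
    have huniv : (Finset.univ : Finset (Fin k)) ⊆ insert a (Q v₀) := by
      intro i _
      obtain ⟨u, v, he⟩ := hsurj i
      by_cases hia : i = a
      · subst hia; exact Finset.mem_insert_self _ _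
      · have h1 : c u v ≠ a := he ▸ hia
        have h2 : c u v₀ ≠ a := fun h => hv₀ (h ▸ hmemQ u v₀)
        have : c u v = c u v₀ := mem2_eq (hP2 u) (hmemP u v) (hmemP u v₀) (haP u) h1 h2
        exact Finset.mem_insert_of_mem (he ▸ this ▸ hmemQ u v₀)
    have h1 := Finset.card_le_card huniv
    have h2 := Finset.card_insert_le a (Q v₀)
    have := hQ2 v₀
    omega
  refine ⟨a, ?_, ?_⟩
  · intro u v₁ v₂ h1 h2
    exact mem2_eq (hP2 u) (hmemP u v₁) (hmemP u v₂) (haP u) h1 h2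
  · intro v u₁ u₂ h1 h2
    exact mem2_eq (hQ2 v) (hmemQ u₁ v) (hmemQ u₂ v) (haQ v) h1 h2


lemma sum_fiber {β : Type*} [DecidableEq β] {n : ℕ} (b : Fin n → β) (Y : Finset β) :
    ∑ x ∈ Y, (Finset.univ.filter (fun u => b u = x)).card
      = (Finset.univ.filter (fun u => b u ∈ Y)).card := by
  rw [Finset.card_eq_sum_card_fiberwise (f := b) (s := Finset.univ.filter (fun u => b u ∈ Y)) (t := Y)
    (fun u hu => (Finset.mem_filter.mp hu).2)]
  apply Finset.sum_congr rfl
  intro x hx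
  congr 1
  ext u
  simp only [Finset.mem_filter, Finset.mem_univ, true_and]
  exact ⟨fun h => ⟨h ▸ hx, h⟩, fun h => h.2⟩

lemma winCols {k N s t : ℕ} {c : Fin N → Fin N → Fin k} (a : Fin k) (b d : Fin N → Fin k)
    (hb : ∀ u v, c u v ≠ a → c u v = b u) (hd : ∀ u v, c u v ≠ a → c u v = d v)
    (Y : Finset (Fin k)) (p q : ℕ) (hpq : (q = s ∧ p = t) ∨ (q = t ∧ p = s))
    (hcols : p ≤ ∑ x ∈ Y, (Finset.univ.filter (fun v => d v = x)).card)
    (hrows : (∑ x ∈ Y, (Finset.univ.filter (fun u => b u = x)).card) + q ≤ N) :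
    hasMonoKst c s t := by
  set T0 : Finset (Fin N) := Finset.univ.filter (fun v => d v ∈ Y) with hT0
  set S0 : Finset (Fin N) := Finset.univ.filter (fun u => b u ∉ Y) with hS0
  have hT0card : p ≤ T0.card := by rw [hT0, ← sum_fiber d Y]; exact hcols
  have hS0card : q ≤ S0.card := by
    have hsplit := Finset.card_filter_add_card_filter_not
      (s := (Finset.univ : Finset (Fin N))) (p := fun u => b u ∈ Y)
    have huniv : (Finset.univ : Finset (Fin N)).card = N := by simp
    rw [sum_fiber b Y] at hrows
    rw [hS0]
    omega
  obtain ⟨T, hTsub, hTcard⟩ := Finset.exists_subset_card_eq hT0card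
  obtain ⟨S, hSsub, hScard⟩ := Finset.exists_subset_card_eq hS0card
  refine ⟨a, S, T, ?_, ?_⟩
  · rcases hpq with ⟨rfl, rfl⟩ | ⟨rfl, rfl⟩
    · exact Or.inl ⟨hScard, hTcard⟩
    · exact Or.inr ⟨hScard, hTcard⟩
  · intro u hu v hv
    by_contra hne
    have h1 : c u v = b u := hb u v hne
    have h2 : c u v = d v := hd u v hne
    have hdv : d v ∈ Y := (Finset.mem_filter.mp (hTsub hv)).2
    have hbu : b u ∉ Y := (Finset.mem_filter.mp (hSsub hu)).2
    exact hbu (h1 ▸ h2 ▸ hdv)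

lemma winRows {k N s t : ℕ} {c : Fin N → Fin N → Fin k} (a : Fin k) (b d : Fin N → Fin k)
    (hb : ∀ u v, c u v ≠ a → c u v = b u) (hd : ∀ u v, c u v ≠ a → c u v = d v)
    (Y : Finset (Fin k)) (p q : ℕ) (hpq : (p = s ∧ q = t) ∨ (p = t ∧ q = s))
    (hrows : p ≤ ∑ x ∈ Y, (Finset.univ.filter (fun u => b u = x)).card)
    (hcols : (∑ x ∈ Y, (Finset.univ.filter (fun v => d v = x)).card) + q ≤ N) :
    hasMonoKst c s t := by
  set S0 : Finset (Fin N) := Finset.univ.filter (fun u => b u ∈ Y) with hS0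
  set T0 : Finset (Fin N) := Finset.univ.filter (fun v => d v ∉ Y) with hT0
  have hS0card : p ≤ S0.card := by rw [hS0, ← sum_fiber b Y]; exact hrows
  have hT0card : q ≤ T0.card := by
    have hsplit := Finset.card_filter_add_card_filter_not
      (s := (Finset.univ : Finset (Fin N))) (p := fun v => d v ∈ Y)
    have huniv : (Finset.univ : Finset (Fin N)).card = N := by simp
    rw [sum_fiber d Y] at hcols
    rw [hT0]
    omega
  obtain ⟨S, hSsub, hScard⟩ := Finset.exists_subset_card_eq hS0card
  obtain ⟨T, hTsub, hTcard⟩ := Finset.exists_subset_card_eq hT0card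
  refine ⟨a, S, T, ?_, ?_⟩
  · rcases hpq with ⟨rfl, rfl⟩ | ⟨rfl, rfl⟩
    · exact Or.inl ⟨hScard, hTcard⟩
    · exact Or.inr ⟨hScard, hTcard⟩
  · intro u hu v hv
    by_contra hne
    have h1 : c u v = b u := hb u v hne
    have h2 : c u v = d v := hd u v hne
    have hbu : b u ∈ Y := (Finset.mem_filter.mp (hSsub hu)).2
    have hdv : d v ∉ Y := (Finset.mem_filter.mp (hTsub hv)).2
    exact hdv (h2 ▸ h1 ▸ hbu)


lemma lowerConstr (k s t : ℕ) (hs : 2 ≤ s) (hst : s < t) (ht : 5 ≤ t)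
    (hk5 : 2 ≤ k) (hk2 : k ≤ t + s) :
    ∃ c : Fin (t+s-1) → Fin (t+s-1) → Fin k,
      (∀ i, ∃ u v, c u v = i) ∧ ¬ hasRainbowK13 c ∧ ¬ hasMonoKst c s t := by
  set N := t + s - 1 with hN
  have hN6 : 6 ≤ N := by omega
  have hkpos : 0 < k := by omega
  set z : Fin k := ⟨0, hkpos⟩ with hz
  set gc : Fin N → Fin k := fun u => ⟨min (u.val+1) (k-1), by omega⟩ with hgc
  set c : Fin N → Fin N → Fin k := fun u v => if u = v then gc u else z with hc
  have hrow : ∀ u v : Fin N, c u v = gc u ∨ c u v = z := by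
    intro u v
    by_cases h : u = v
    · left; simp [hc, h]
    · right; simp [hc, h]
  have hcol : ∀ u v : Fin N, c u v = gc v ∨ c u v = z := by
    intro u v
    by_cases h : u = v
    · left; simp [hc, h]
    · right; simp [hc, h]
  have hgz : ∀ u : Fin N, gc u ≠ z := by
    intro u he
    have : min (u.val+1) (k-1) = 0 := congrArg Fin.val he
    omega
  refine ⟨c, ?_, ?_, ?_⟩
  · -- onto
    intro i
    by_cases hi : i.val = 0
    · refine ⟨⟨0, by omega⟩, ⟨1, by omega⟩, ?_⟩
      have hne : (⟨0, by omega⟩ : Fin N) ≠ ⟨1, by omega⟩ := by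
        intro he; exact absurd (congrArg Fin.val he) (by simp)
      simp only [hc, if_neg hne]
      exact Fin.ext (by simp [hz, hi])
    · have hib : i.val - 1 < N := by omega
      refine ⟨⟨i.val - 1, hib⟩, ⟨i.val - 1, hib⟩, ?_⟩
      simp only [hc, if_pos rfl]
      refine Fin.ext ?_
      show min (i.val - 1 + 1) (k-1) = i.val
      omega
  · -- no rainbow
    rintro (⟨u, v₁, v₂, v₃, h12, h13, h23⟩ | ⟨v, u₁, u₂, u₃, h12, h13, h23⟩)
    · rcases hrow u v₁ with e1|e1 <;> rcases hrow u v₂ with e2|e2 <;>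
        rcases hrow u v₃ with e3|e3 <;> simp only [e1, e2, e3, ne_eq, not_true_eq_false] at h12 h13 h23
    · rcases hcol u₁ v with e1|e1 <;> rcases hcol u₂ v with e2|e2 <;>
        rcases hcol u₃ v with e3|e3 <;> simp only [e1, e2, e3, ne_eq, not_true_eq_false] at h12 h13 h23
  · -- no mono
    rintro ⟨i, S, T, hcards, hmono⟩
    by_cases hi : i = z
    · -- base color : use |S|+|T| = N+1 > N
      have hST : S.card + T.card = N + 1 := by rcases hcards with ⟨h1,h2⟩|⟨h1,h2⟩ <;> omega
      have hinter : (S ∩ T).Nonempty := by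
        rw [← Finset.card_pos]
        have h1 : (S ∪ T).card + (S ∩ T).card = S.card + T.card := Finset.card_union_add_card_inter S T
        have h2 : (S ∪ T).card ≤ N := by
          simpa using Finset.card_le_card (Finset.subset_univ (S ∪ T))
        omega
      obtain ⟨w, hw⟩ := hinter
      have := hmono w (Finset.mem_of_mem_inter_left hw) w (Finset.mem_of_mem_inter_right hw)
      rw [hi] at this
      exact hgz w (by simpa [hc] using this)
    · -- diagonal color : needs two distinct rows
      have hS2 : 1 < S.card := by rcases hcards with ⟨h1,_⟩|⟨h1,_⟩ <;> omega
      have hT1 : T.Nonempty := by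
        rw [← Finset.card_pos]; rcases hcards with ⟨_,h2⟩|⟨_,h2⟩ <;> omega
      obtain ⟨u₁, hu₁, u₂, hu₂, hne⟩ := Finset.one_lt_card.mp hS2
      obtain ⟨v, hv⟩ := hT1
      have e1 := hmono u₁ hu₁ v hv
      have e2 := hmono u₂ hu₂ v hv
      have d1 : u₁ = v := by
        by_contra hx; simp [hc, if_neg hx] at e1; exact hi e1.symm
      have d2 : u₂ = v := by
        by_contra hx; simp [hc, if_neg hx] at e2; exact hi e2.symm
      exact hne (d1.trans d2.symm)


set_option maxHeartbeats 2000000 in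
theorem upperBound_s16 {s t N k : ℕ} (c : Fin N → Fin N → Fin k)
    (hs : 2 ≤ s) (hst : s < t) (ht : 5 ≤ t) (hk1 : t + s - t/2 ≤ k)
    (hN : s + t ≤ N) (hsurj : ∀ i, ∃ u v, c u v = i)
    (hnr : ¬ hasRainbowK13 c) : hasMonoKst c s t := by
  by_contra hnm
  have hk5 : 5 ≤ k := by omega
  obtain ⟨a, hrowp, hcolp⟩ := exists_base c hk5 (by omega) hsurj hnr
  -- choose row/column majority colors
  have hbex : ∀ u : Fin N, ∃ bu, ∀ v, c u v ≠ a → c u v = bu := by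
    intro u
    by_cases hex : ∃ v, c u v ≠ a
    · obtain ⟨v₀, hv₀⟩ := hex; exact ⟨c u v₀, fun v hv => hrowp u v v₀ hv hv₀⟩
    · push_neg at hex; exact ⟨a, fun v hv => absurd (hex v) hv⟩
  choose b hb using hbex
  have hdex : ∀ v : Fin N, ∃ dv, ∀ u, c u v ≠ a → c u v = dv := by
    intro v
    by_cases hex : ∃ u, c u v ≠ a
    · obtain ⟨u₀, hu₀⟩ := hex; exact ⟨c u₀ v, fun u hu => hcolp v u u₀ hu hu₀⟩
    · push_neg at hex; exact ⟨a, fun u hu => absurd (hex u) hu⟩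
  choose d hd using hdex
  have hb' : ∀ u v, c u v ≠ a → c u v = b u := fun u v h => hb u v h
  have hd' : ∀ u v, c u v ≠ a → c u v = d v := fun u v h => hd v u h
  set ρ : Fin k → ℕ := fun x => (Finset.univ.filter (fun u => b u = x)).card with hρ
  set γ : Fin k → ℕ := fun x => (Finset.univ.filter (fun v => d v = x)).card with hγ
  set X : Finset (Fin k) := Finset.univ.erase a with hX
  have hmX : X.card = k - 1 := by
    rw [hX, Finset.card_erase_of_mem (Finset.mem_univ a)]; simp
  have hρ1 : ∀ x ∈ X, 1 ≤ ρ x := by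
    intro x hx
    have hxa : x ≠ a := Finset.ne_of_mem_erase hx
    obtain ⟨u, v, he⟩ := hsurj x
    have : b u = x := by rw [← hb' u v (by rw [he]; exact hxa)]; exact he
    rw [hρ]
    exact Finset.card_pos.mpr ⟨u, Finset.mem_filter.mpr ⟨Finset.mem_univ u, this⟩⟩
  have hγ1 : ∀ x ∈ X, 1 ≤ γ x := by
    intro x hx
    have hxa : x ≠ a := Finset.ne_of_mem_erase hx
    obtain ⟨u, v, he⟩ := hsurj x
    have : d v = x := by rw [← hd' u v (by rw [he]; exact hxa)]; exact he
    rw [hγ]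
    exact Finset.card_pos.mpr ⟨v, Finset.mem_filter.mpr ⟨Finset.mem_univ v, this⟩⟩
  have hρN : ∀ Y : Finset (Fin k), ∑ x ∈ Y, ρ x ≤ N := by
    intro Y
    rw [hρ]
    rw [sum_fiber]
    simpa using Finset.card_le_card (Finset.subset_univ (Finset.univ.filter (fun u => b u ∈ Y)))
  have hγN : ∀ Y : Finset (Fin k), ∑ x ∈ Y, γ x ≤ N := by
    intro Y
    rw [hγ]
    rw [sum_fiber]
    simpa using Finset.card_le_card (Finset.subset_univ (Finset.univ.filter (fun v => d v ∈ Y)))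
  -- the four forbidden-configuration facts
  have eρ : ∀ Y : Finset (Fin k), (∑ x ∈ Y, (Finset.univ.filter (fun u => b u = x)).card) = ∑ x ∈ Y, ρ x := fun _ => rfl
  have eγ : ∀ Y : Finset (Fin k), (∑ x ∈ Y, (Finset.univ.filter (fun v => d v = x)).card) = ∑ x ∈ Y, γ x := fun _ => rfl
  have F1 : ∀ Y : Finset (Fin k), s ≤ ∑ x ∈ Y, γ x → N - t + 1 ≤ ∑ x ∈ Y, ρ x := by
    intro Y hY
    by_contra hcon
    exact hnm (winCols a b d hb' hd' Y s t (Or.inr ⟨rfl, rfl⟩) (by rw [eγ]; exact hY)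
      (by rw [eρ]; omega))
  have F2 : ∀ Y : Finset (Fin k), s ≤ ∑ x ∈ Y, ρ x → N - t + 1 ≤ ∑ x ∈ Y, γ x := by
    intro Y hY
    by_contra hcon
    exact hnm (winRows a b d hb' hd' Y s t (Or.inl ⟨rfl, rfl⟩) (by rw [eρ]; exact hY)
      (by rw [eγ]; omega))
  have F3 : ∀ Y : Finset (Fin k), t ≤ ∑ x ∈ Y, γ x → N - s + 1 ≤ ∑ x ∈ Y, ρ x := by
    intro Y hY
    by_contra hcon
    exact hnm (winCols a b d hb' hd' Y t s (Or.inl ⟨rfl, rfl⟩) (by rw [eγ]; exact hY)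
      (by rw [eρ]; omega))
  have F4 : ∀ Y : Finset (Fin k), t ≤ ∑ x ∈ Y, ρ x → N - s + 1 ≤ ∑ x ∈ Y, γ x := by
    intro Y hY
    by_contra hcon
    exact hnm (winRows a b d hb' hd' Y t s (Or.inr ⟨rfl, rfl⟩) (by rw [eρ]; exact hY)
      (by rw [eγ]; omega))
  -- D-facts
  have hD1ρ : ∀ Y ⊆ X, s ≤ Y.card → N - t + 1 ≤ ∑ x ∈ Y, ρ x := by
    intro Y hYX hYc
    apply F1
    have h1 : Y.card * 1 ≤ ∑ x ∈ Y, γ x := by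
      simpa using Finset.card_nsmul_le_sum Y γ 1 (fun x hx => hγ1 x (hYX hx))
    omega
  have hD1γ : ∀ Y ⊆ X, s ≤ Y.card → N - t + 1 ≤ ∑ x ∈ Y, γ x := by
    intro Y hYX hYc
    apply F2
    have h1 : Y.card * 1 ≤ ∑ x ∈ Y, ρ x := by
      simpa using Finset.card_nsmul_le_sum Y ρ 1 (fun x hx => hρ1 x (hYX hx))
    omega
  have hD2ρ : ∀ Y ⊆ X, Y.card + s ≤ X.card → (∑ x ∈ Y, ρ x) + (N - t + 1) ≤ ∑ x ∈ X, ρ x := by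
    intro Y hYX hYc
    have hcard : s ≤ (X \ Y).card := by
      rw [Finset.card_sdiff_of_subset hYX]; omega
    obtain ⟨S, hSsub, hScard⟩ := Finset.exists_subset_card_eq hcard
    have hSX : S ⊆ X := hSsub.trans Finset.sdiff_subset
    have h1 : N - t + 1 ≤ ∑ x ∈ S, ρ x := hD1ρ S hSX (by omega)
    have hdisj : Disjoint Y S := Disjoint.mono_right hSsub Finset.disjoint_sdiff
    have h2 : (∑ x ∈ Y, ρ x) + (∑ x ∈ S, ρ x) = ∑ x ∈ Y ∪ S, ρ x := (Finset.sum_union hdisj).symm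
    have h3 : ∑ x ∈ Y ∪ S, ρ x ≤ ∑ x ∈ X, ρ x :=
      Finset.sum_le_sum_of_subset (Finset.union_subset hYX hSX)
    omega
  have hD2γ : ∀ Y ⊆ X, Y.card + s ≤ X.card → (∑ x ∈ Y, γ x) + (N - t + 1) ≤ ∑ x ∈ X, γ x := by
    intro Y hYX hYc
    have hcard : s ≤ (X \ Y).card := by
      rw [Finset.card_sdiff_of_subset hYX]; omega
    obtain ⟨S, hSsub, hScard⟩ := Finset.exists_subset_card_eq hcard
    have hSX : S ⊆ X := hSsub.trans Finset.sdiff_subset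
    have h1 : N - t + 1 ≤ ∑ x ∈ S, γ x := hD1γ S hSX (by omega)
    have hdisj : Disjoint Y S := Disjoint.mono_right hSsub Finset.disjoint_sdiff
    have h2 : (∑ x ∈ Y, γ x) + (∑ x ∈ S, γ x) = ∑ x ∈ Y ∪ S, γ x := (Finset.sum_union hdisj).symm
    have h3 : ∑ x ∈ Y ∪ S, γ x ≤ ∑ x ∈ X, γ x :=
      Finset.sum_le_sum_of_subset (Finset.union_subset hYX hSX)
    omega
  have hOρ : (X.filter (fun x => ρ x = 1)).card ≤ s - 1 := by
    by_contra hcon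
    obtain ⟨S, hSsub, hScard⟩ := Finset.exists_subset_card_eq
      (show s ≤ (X.filter (fun x => ρ x = 1)).card by omega)
    have hSX : S ⊆ X := hSsub.trans (Finset.filter_subset _ _)
    have h1 := hD1ρ S hSX (by omega)
    have h2 : ∑ x ∈ S, ρ x = s := by
      rw [Finset.sum_congr rfl (fun x hx => (Finset.mem_filter.mp (hSsub hx)).2)]
      simp [hScard]
    omega
  have hOγ : (X.filter (fun x => γ x = 1)).card ≤ s - 1 := by
    by_contra hcon
    obtain ⟨S, hSsub, hScard⟩ := Finset.exists_subset_card_eq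
      (show s ≤ (X.filter (fun x => γ x = 1)).card by omega)
    have hSX : S ⊆ X := hSsub.trans (Finset.filter_subset _ _)
    have h1 := hD1γ S hSX (by omega)
    have h2 : ∑ x ∈ S, γ x = s := by
      rw [Finset.sum_congr rfl (fun x hx => (Finset.mem_filter.mp (hSsub hx)).2)]
      simp [hScard]
    omega
  have hP2ρcard : X.card ≤ (X.filter (fun x => 2 ≤ ρ x)).card + (s-1) := by
    have hsplit := Finset.card_filter_add_card_filter_not (s := X)
      (p := fun x => 2 ≤ ρ x)
    have heq : X.filter (fun x => ¬ 2 ≤ ρ x) = X.filter (fun x => ρ x = 1) := by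
      apply Finset.filter_congr
      intro x hx
      have := hρ1 x hx
      exact ⟨fun h => by omega, fun h => by omega⟩
    rw [heq] at hsplit
    omega
  have hP2γcard : X.card ≤ (X.filter (fun x => 2 ≤ γ x)).card + (s-1) := by
    have hsplit := Finset.card_filter_add_card_filter_not (s := X)
      (p := fun x => 2 ≤ γ x)
    have heq : X.filter (fun x => ¬ 2 ≤ γ x) = X.filter (fun x => γ x = 1) := by
      apply Finset.filter_congr
      intro x hx
      have := hγ1 x hx
      exact ⟨fun h => by omega, fun h => by omega⟩
    rw [heq] at hsplit
    omega
  have hXcard : X.card = s + (t - t/2) - 1 := by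
    have hk1' : s + (t - t/2) - 1 ≤ X.card := by omega
    have hYex : X.card - s ≤ (X.filter (fun x => 2 ≤ ρ x)).card := by omega
    obtain ⟨Y, hYsub, hYcard⟩ := Finset.exists_subset_card_eq hYex
    have hYX : Y ⊆ X := hYsub.trans (Finset.filter_subset _ _)
    have h2 := hD2ρ Y hYX (by omega)
    have h3 : Y.card * 2 ≤ ∑ x ∈ Y, ρ x := by
      simpa using Finset.card_nsmul_le_sum Y ρ 2 (fun x hx => (Finset.mem_filter.mp (hYsub hx)).2)
    have h4 := hρN X
    omega
  -- total γ is close to N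
  have hgbound : N ≤ (∑ x ∈ X, γ x) + 1 ∧ (t % 2 = 1 → N ≤ ∑ x ∈ X, γ x) := by
    have hsub : X.filter (fun x => γ x = 1) ⊆ X := Finset.filter_subset _ _
    obtain ⟨S, hOS, hSX, hScard⟩ := Finset.exists_subsuperset_card_eq hsub
      (show (X.filter (fun x => γ x = 1)).card ≤ s by omega) (by omega)
    have h1 : N - t + 1 ≤ ∑ x ∈ S, γ x := hD1γ S hSX (by omega)
    have hsd : (∑ x ∈ X \ S, γ x) + (∑ x ∈ S, γ x) = ∑ x ∈ X, γ x := Finset.sum_sdiff hSX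
    have h2 : (X \ S).card * 2 ≤ ∑ x ∈ X \ S, γ x := by
      have := Finset.card_nsmul_le_sum (X \ S) γ 2 (fun x hx => by
        have hxX : x ∈ X := (Finset.mem_sdiff.mp hx).1
        have hxS : x ∉ S := (Finset.mem_sdiff.mp hx).2
        have h' : γ x ≠ 1 := fun h => hxS (hOS (Finset.mem_filter.mpr ⟨hxX, h⟩))
        have := hγ1 x hxX
        omega)
      simpa using this
    have hcardsd : (X \ S).card = X.card - s := by rw [Finset.card_sdiff_of_subset hSX]; omega
    constructor
    · omega
    · intro hto; omega
  -- individual value bounds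
  have hD6γ : ∀ x ∈ X, γ x + 2*((t - t/2) - 2) + (N - t + 1) ≤ ∑ y ∈ X, γ y := by
    intro x hx
    have hcard : (t - t/2) - 2 ≤ ((X.filter (fun y => 2 ≤ γ y)).erase x).card := by
      have h3 : (X.filter (fun y => 2 ≤ γ y)).card - 1 ≤ ((X.filter (fun y => 2 ≤ γ y)).erase x).card := by
        by_cases hxm : x ∈ X.filter (fun y => 2 ≤ γ y)
        · rw [Finset.card_erase_of_mem hxm]
        · rw [Finset.erase_eq_of_notMem hxm]; omega
      omega
    obtain ⟨W, hWsub, hWcard⟩ := Finset.exists_subset_card_eq hcard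
    have hWX : W ⊆ X := hWsub.trans ((Finset.erase_subset _ _).trans (Finset.filter_subset _ _))
    have hxW : x ∉ W := fun h => (Finset.notMem_erase x _) (hWsub h)
    have hY : insert x W ⊆ X := Finset.insert_subset hx hWX
    have hYcard : (insert x W).card = (t - t/2) - 2 + 1 := by
      rw [Finset.card_insert_of_notMem hxW, hWcard]
    have h2 := hD2γ (insert x W) hY (by omega)
    have h3 : W.card * 2 ≤ ∑ y ∈ W, γ y := by
      have := Finset.card_nsmul_le_sum W γ 2
        (fun y hy => (Finset.mem_filter.mp (Finset.mem_of_mem_erase (hWsub hy))).2)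
      simpa using this
    have h4 : ∑ y ∈ insert x W, γ y = γ x + ∑ y ∈ W, γ y := Finset.sum_insert hxW
    omega
  have hD6ρ : ∀ x ∈ X, ρ x + 2*((t - t/2) - 2) + (N - t + 1) ≤ ∑ y ∈ X, ρ y := by
    intro x hx
    have hcard : (t - t/2) - 2 ≤ ((X.filter (fun y => 2 ≤ ρ y)).erase x).card := by
      have h3 : (X.filter (fun y => 2 ≤ ρ y)).card - 1 ≤ ((X.filter (fun y => 2 ≤ ρ y)).erase x).card := by
        by_cases hxm : x ∈ X.filter (fun y => 2 ≤ ρ y)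
        · rw [Finset.card_erase_of_mem hxm]
        · rw [Finset.erase_eq_of_notMem hxm]; omega
      omega
    obtain ⟨W, hWsub, hWcard⟩ := Finset.exists_subset_card_eq hcard
    have hWX : W ⊆ X := hWsub.trans ((Finset.erase_subset _ _).trans (Finset.filter_subset _ _))
    have hxW : x ∉ W := fun h => (Finset.notMem_erase x _) (hWsub h)
    have hY : insert x W ⊆ X := Finset.insert_subset hx hWX
    have hYcard : (insert x W).card = (t - t/2) - 2 + 1 := by
      rw [Finset.card_insert_of_notMem hxW, hWcard]
    have h2 := hD2ρ (insert x W) hY (by omega)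
    have h3 : W.card * 2 ≤ ∑ y ∈ W, ρ y := by
      have := Finset.card_nsmul_le_sum W ρ 2
        (fun y hy => (Finset.mem_filter.mp (Finset.mem_of_mem_erase (hWsub hy))).2)
      simpa using this
    have h4 : ∑ y ∈ insert x W, ρ y = ρ x + ∑ y ∈ W, ρ y := Finset.sum_insert hxW
    omega
  have hρ3 : ∀ x ∈ X, ρ x ≤ 3 := by
    intro x hx
    have := hD6ρ x hx
    have := hρN X
    omega
  have hγ3 : ∀ x ∈ X, γ x ≤ 3 := by
    intro x hx
    have := hD6γ x hx
    have := hγN X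
    omega
  have hρ3o : t % 2 = 1 → ∀ x ∈ X, ρ x ≤ 2 := by
    intro hto x hx
    have := hD6ρ x hx
    have := hρN X
    omega
  have hγ3o : t % 2 = 1 → ∀ x ∈ X, γ x ≤ 2 := by
    intro hto x hx
    have := hD6γ x hx
    have := hγN X
    omega
  -- at most one ρ-value-3 color, and same for γ
  have hD7ρ : (X.filter (fun x => ρ x = 3)).card ≤ 1 := by
    by_contra hcon
    push_neg at hcon
    obtain ⟨x, hxm, y, hym, hxy⟩ := Finset.one_lt_card.mp hcon
    have hxX : x ∈ X := (Finset.mem_filter.mp hxm).1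
    have hyX : y ∈ X := (Finset.mem_filter.mp hym).1
    have hcard : (t - t/2) - 3 ≤ (((X.filter (fun z => 2 ≤ ρ z)).erase x).erase y).card := by
      have e1 : (X.filter (fun z => 2 ≤ ρ z)).card - 1 ≤ ((X.filter (fun z => 2 ≤ ρ z)).erase x).card := by
        by_cases hxm' : x ∈ X.filter (fun z => 2 ≤ ρ z)
        · rw [Finset.card_erase_of_mem hxm']
        · rw [Finset.erase_eq_of_notMem hxm']; omega
      have e2 : ((X.filter (fun z => 2 ≤ ρ z)).erase x).card - 1 ≤ (((X.filter (fun z => 2 ≤ ρ z)).erase x).erase y).card := by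
        by_cases hym' : y ∈ (X.filter (fun z => 2 ≤ ρ z)).erase x
        · rw [Finset.card_erase_of_mem hym']
        · rw [Finset.erase_eq_of_notMem hym']; omega
      omega
    obtain ⟨W, hWsub, hWcard⟩ := Finset.exists_subset_card_eq hcard
    have hWX : W ⊆ X := hWsub.trans (((Finset.erase_subset _ _).trans (Finset.erase_subset _ _)).trans (Finset.filter_subset _ _))
    have hyW : y ∉ W := fun h => (Finset.notMem_erase y _) (hWsub h)
    have hxW : x ∉ insert y W := by
      intro h
      rcases Finset.mem_insert.mp h with h'|h'
      · exact hxy h'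
      · exact (Finset.notMem_erase x _) (Finset.mem_of_mem_erase (hWsub h'))
    have hY : insert x (insert y W) ⊆ X :=
      Finset.insert_subset hxX (Finset.insert_subset hyX hWX)
    have hYcard : (insert x (insert y W)).card = (t - t/2) - 3 + 2 := by
      rw [Finset.card_insert_of_notMem hxW, Finset.card_insert_of_notMem hyW, hWcard]
    have h2 := hD2ρ (insert x (insert y W)) hY (by omega)
    have h3 : W.card * 2 ≤ ∑ z ∈ W, ρ z := by
      have := Finset.card_nsmul_le_sum W ρ 2
        (fun z hz => (Finset.mem_filter.mp (Finset.mem_of_mem_erase (Finset.mem_of_mem_erase (hWsub hz)))).2)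
      simpa using this
    have h4 : ∑ z ∈ insert x (insert y W), ρ z = ρ x + (ρ y + ∑ z ∈ W, ρ z) := by
      rw [Finset.sum_insert hxW, Finset.sum_insert hyW]
    have hρx : ρ x = 3 := (Finset.mem_filter.mp hxm).2
    have hρy : ρ y = 3 := (Finset.mem_filter.mp hym).2
    have h5 := hρN X
    omega
  have hD7γ : (X.filter (fun x => γ x = 3)).card ≤ 1 := by
    by_contra hcon
    push_neg at hcon
    obtain ⟨x, hxm, y, hym, hxy⟩ := Finset.one_lt_card.mp hcon
    have hxX : x ∈ X := (Finset.mem_filter.mp hxm).1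
    have hyX : y ∈ X := (Finset.mem_filter.mp hym).1
    have hcard : (t - t/2) - 3 ≤ (((X.filter (fun z => 2 ≤ γ z)).erase x).erase y).card := by
      have e1 : (X.filter (fun z => 2 ≤ γ z)).card - 1 ≤ ((X.filter (fun z => 2 ≤ γ z)).erase x).card := by
        by_cases hxm' : x ∈ X.filter (fun z => 2 ≤ γ z)
        · rw [Finset.card_erase_of_mem hxm']
        · rw [Finset.erase_eq_of_notMem hxm']; omega
      have e2 : ((X.filter (fun z => 2 ≤ γ z)).erase x).card - 1 ≤ (((X.filter (fun z => 2 ≤ γ z)).erase x).erase y).card := by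
        by_cases hym' : y ∈ (X.filter (fun z => 2 ≤ γ z)).erase x
        · rw [Finset.card_erase_of_mem hym']
        · rw [Finset.erase_eq_of_notMem hym']; omega
      omega
    obtain ⟨W, hWsub, hWcard⟩ := Finset.exists_subset_card_eq hcard
    have hWX : W ⊆ X := hWsub.trans (((Finset.erase_subset _ _).trans (Finset.erase_subset _ _)).trans (Finset.filter_subset _ _))
    have hyW : y ∉ W := fun h => (Finset.notMem_erase y _) (hWsub h)
    have hxW : x ∉ insert y W := by
      intro h
      rcases Finset.mem_insert.mp h with h'|h'
      · exact hxy h'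
      · exact (Finset.notMem_erase x _) (Finset.mem_of_mem_erase (hWsub h'))
    have hY : insert x (insert y W) ⊆ X :=
      Finset.insert_subset hxX (Finset.insert_subset hyX hWX)
    have hYcard : (insert x (insert y W)).card = (t - t/2) - 3 + 2 := by
      rw [Finset.card_insert_of_notMem hxW, Finset.card_insert_of_notMem hyW, hWcard]
    have h2 := hD2γ (insert x (insert y W)) hY (by omega)
    have h3 : W.card * 2 ≤ ∑ z ∈ W, γ z := by
      have := Finset.card_nsmul_le_sum W γ 2
        (fun z hz => (Finset.mem_filter.mp (Finset.mem_of_mem_erase (Finset.mem_of_mem_erase (hWsub hz)))).2)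
      simpa using this
    have h4 : ∑ z ∈ insert x (insert y W), γ z = γ x + (γ y + ∑ z ∈ W, γ z) := by
      rw [Finset.sum_insert hxW, Finset.sum_insert hyW]
    have hγx : γ x = 3 := (Finset.mem_filter.mp hxm).2
    have hγy : γ y = 3 := (Finset.mem_filter.mp hym).2
    have h5 := hγN X
    omega
  -- s = 2 shortcut
  rcases Nat.lt_or_ge s 3 with hs2 | hs3
  · -- s = 2 : any color with γ ≥ 2 and ρ ≤ 2 violates F1
    have hfc : ¬ (X.filter (fun y => 2 ≤ γ y)) ⊆ (X.filter (fun x => ρ x = 3)) := by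
      intro hsubf
      have := Finset.card_le_card hsubf
      omega
    obtain ⟨x, hxm, hxn⟩ := Finset.not_subset.mp hfc
    have hxX : x ∈ X := (Finset.mem_filter.mp hxm).1
    have hγx : 2 ≤ γ x := (Finset.mem_filter.mp hxm).2
    have hρx : ρ x ≤ 2 := by
      have h1 := hρ3 x hxX
      have h2 : ρ x ≠ 3 := fun h => hxn (Finset.mem_filter.mpr ⟨hxX, h⟩)
      omega
    have := F1 {x} (by rw [Finset.sum_singleton]; omega)
    rw [Finset.sum_singleton] at this
    omega
  -- now s ≥ 3
  -- every (ρ = 1)-color has γ = 1 and vice versa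
  have hZb : ∀ Z : Finset (Fin k), Z ⊆ X →
      ∑ y ∈ Z, ρ y ≤ 2*Z.card + (Z.filter (fun y => ρ y = 3)).card := by
    intro Z hZX
    have h1 : ∑ y ∈ Z, ρ y ≤ ∑ y ∈ Z, (2 + if ρ y = 3 then 1 else 0) := by
      apply Finset.sum_le_sum
      intro y hy
      have := hρ3 y (hZX hy)
      split_ifs with h <;> omega
    have h2 : ∑ y ∈ Z, (2 + if ρ y = 3 then 1 else 0)
        = 2*Z.card + (Z.filter (fun y => ρ y = 3)).card := by
      rw [Finset.sum_add_distrib]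
      congr 1
      · rw [Finset.sum_const]; simp [mul_comm]
      · rw [← Finset.sum_filter]; simp
    omega
  have hZbγ : ∀ Z : Finset (Fin k), Z ⊆ X →
      ∑ y ∈ Z, γ y ≤ 2*Z.card + (Z.filter (fun y => γ y = 3)).card := by
    intro Z hZX
    have h1 : ∑ y ∈ Z, γ y ≤ ∑ y ∈ Z, (2 + if γ y = 3 then 1 else 0) := by
      apply Finset.sum_le_sum
      intro y hy
      have := hγ3 y (hZX hy)
      split_ifs with h <;> omega
    have h2 : ∑ y ∈ Z, (2 + if γ y = 3 then 1 else 0)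
        = 2*Z.card + (Z.filter (fun y => γ y = 3)).card := by
      rw [Finset.sum_add_distrib]
      congr 1
      · rw [Finset.sum_const]; simp [mul_comm]
      · rw [← Finset.sum_filter]; simp
    omega
  have hC0 : ∀ x ∈ X, ρ x = 1 → γ x = 1 := by
    intro x hx hρx
    by_contra hγx
    have hγx2 : 2 ≤ γ x := by have := hγ1 x hx; omega
    have hxm : x ∈ X.filter (fun y => 2 ≤ γ y) := Finset.mem_filter.mpr ⟨hx, hγx2⟩
    obtain ⟨Y, hxY, hYsub, hYcard⟩ := Finset.exists_subsuperset_card_eq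
      (Finset.singleton_subset_iff.mpr hxm) (by simp; omega)
      (show t - t/2 ≤ (X.filter (fun y => 2 ≤ γ y)).card by omega)
    have hYX : Y ⊆ X := hYsub.trans (Finset.filter_subset _ _)
    have hxY' : x ∈ Y := hxY (Finset.mem_singleton_self x)
    have hG : t ≤ ∑ y ∈ Y, γ y := by
      have h1 : Y.card * 2 ≤ ∑ y ∈ Y, γ y := by
        have := Finset.card_nsmul_le_sum Y γ 2
          (fun y hy => (Finset.mem_filter.mp (hYsub hy)).2)
        simpa using this
      omega
    have h3 := F3 Y hG
    have hsplit : ∑ y ∈ Y, ρ y = ρ x + ∑ y ∈ Y.erase x, ρ y :=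
      (Finset.add_sum_erase Y ρ hxY').symm
    have herX : Y.erase x ⊆ X := (Finset.erase_subset _ _).trans hYX
    have hbound := hZb (Y.erase x) herX
    have hercard : (Y.erase x).card = t - t/2 - 1 := by
      rw [Finset.card_erase_of_mem hxY', hYcard]
    have h3cnt : ((Y.erase x).filter (fun y => ρ y = 3)).card ≤ 1 := by
      refine le_trans (Finset.card_le_card ?_) hD7ρ
      intro y hy
      exact Finset.mem_filter.mpr ⟨herX (Finset.mem_filter.mp hy).1, (Finset.mem_filter.mp hy).2⟩
    have h3cnt0 : t % 2 = 1 → ((Y.erase x).filter (fun y => ρ y = 3)).card = 0 := by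
      intro hto
      rw [Finset.card_eq_zero]
      apply Finset.eq_empty_of_forall_notMem
      intro y hy
      have := hρ3o hto y (herX (Finset.mem_filter.mp hy).1)
      have := (Finset.mem_filter.mp hy).2
      omega
    rcases Nat.even_or_odd t with hev | hodd'
    · have hte : t % 2 = 0 := Nat.even_iff.mp hev
      omega
    · have hto : t % 2 = 1 := Nat.odd_iff.mp hodd'
      have := h3cnt0 hto
      omega
  have hA0 : ∀ x ∈ X, γ x = 1 → ρ x = 1 := by
    intro x hx hγx
    by_contra hρx
    have hρx2 : 2 ≤ ρ x := by have := hρ1 x hx; omega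
    have hxm : x ∈ X.filter (fun y => 2 ≤ ρ y) := Finset.mem_filter.mpr ⟨hx, hρx2⟩
    obtain ⟨Y, hxY, hYsub, hYcard⟩ := Finset.exists_subsuperset_card_eq
      (Finset.singleton_subset_iff.mpr hxm) (by simp; omega)
      (show t - t/2 ≤ (X.filter (fun y => 2 ≤ ρ y)).card by omega)
    have hYX : Y ⊆ X := hYsub.trans (Finset.filter_subset _ _)
    have hxY' : x ∈ Y := hxY (Finset.mem_singleton_self x)
    have hG : t ≤ ∑ y ∈ Y, ρ y := by
      have h1 : Y.card * 2 ≤ ∑ y ∈ Y, ρ y := by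
        have := Finset.card_nsmul_le_sum Y ρ 2
          (fun y hy => (Finset.mem_filter.mp (hYsub hy)).2)
        simpa using this
      omega
    have h3 := F4 Y hG
    have hsplit : ∑ y ∈ Y, γ y = γ x + ∑ y ∈ Y.erase x, γ y :=
      (Finset.add_sum_erase Y γ hxY').symm
    have herX : Y.erase x ⊆ X := (Finset.erase_subset _ _).trans hYX
    have hbound := hZbγ (Y.erase x) herX
    have hercard : (Y.erase x).card = t - t/2 - 1 := by
      rw [Finset.card_erase_of_mem hxY', hYcard]
    have h3cnt : ((Y.erase x).filter (fun y => γ y = 3)).card ≤ 1 := by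
      refine le_trans (Finset.card_le_card ?_) hD7γ
      intro y hy
      exact Finset.mem_filter.mpr ⟨herX (Finset.mem_filter.mp hy).1, (Finset.mem_filter.mp hy).2⟩
    have h3cnt0 : t % 2 = 1 → ((Y.erase x).filter (fun y => γ y = 3)).card = 0 := by
      intro hto
      rw [Finset.card_eq_zero]
      apply Finset.eq_empty_of_forall_notMem
      intro y hy
      have := hγ3o hto y (herX (Finset.mem_filter.mp hy).1)
      have := (Finset.mem_filter.mp hy).2
      omega
    rcases Nat.even_or_odd t with hev | hodd'
    · have hte : t % 2 = 0 := Nat.even_iff.mp hev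
      omega
    · have hto : t % 2 = 1 := Nat.odd_iff.mp hodd'
      have := h3cnt0 hto
      omega
  -- partition into classes
  set Dcl : Finset (Fin k) := X.filter (fun x => ρ x = 1) with hDcl
  set B2 : Finset (Fin k) := X.filter (fun x => ρ x = 2 ∧ γ x = 2) with hB2
  set Bw : Finset (Fin k) := X.filter (fun x => ρ x = 3 ∧ γ x = 2) with hBw
  set Bz : Finset (Fin k) := X.filter (fun x => γ x = 3) with hBz
  have hdBzBw : Disjoint Bw Bz := by
    rw [Finset.disjoint_left]; intro z h1 h2
    rw [hBw] at h1; rw [hBz] at h2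
    have e1 := (Finset.mem_filter.mp h1).2
    have e2 := (Finset.mem_filter.mp h2).2
    omega
  have hdB2 : Disjoint B2 (Bw ∪ Bz) := by
    rw [Finset.disjoint_left]; intro z h1 h2
    rw [hB2] at h1
    have e1 := (Finset.mem_filter.mp h1).2
    rcases Finset.mem_union.mp h2 with h2|h2
    · rw [hBw] at h2; have e2 := (Finset.mem_filter.mp h2).2; omega
    · rw [hBz] at h2; have e2 := (Finset.mem_filter.mp h2).2; omega
  have hdD : Disjoint Dcl (B2 ∪ (Bw ∪ Bz)) := by
    rw [Finset.disjoint_left]; intro z h1 h2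
    rw [hDcl] at h1
    have e0 := (Finset.mem_filter.mp h1).1
    have e1 := (Finset.mem_filter.mp h1).2
    have e1' := hC0 z e0 e1
    rcases Finset.mem_union.mp h2 with h2|h2
    · rw [hB2] at h2; have e2 := (Finset.mem_filter.mp h2).2; omega
    · rcases Finset.mem_union.mp h2 with h2|h2
      · rw [hBw] at h2; have e2 := (Finset.mem_filter.mp h2).2; omega
      · rw [hBz] at h2; have e2 := (Finset.mem_filter.mp h2).2; omega
  have hunion : X = Dcl ∪ (B2 ∪ (Bw ∪ Bz)) := by
    apply Finset.Subset.antisymm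
    · intro x hx
      simp only [Finset.mem_union, hDcl, hB2, hBw, hBz, Finset.mem_filter]
      have h1 := hρ1 x hx
      have h2 := hγ1 x hx
      have h3 := hρ3 x hx
      have h4 := hγ3 x hx
      have h5 := hC0 x hx
      have h6 := hA0 x hx
      by_cases hg3 : γ x = 3
      · right; right; right; exact ⟨hx, hg3⟩
      · by_cases hg1 : γ x = 1
        · left; exact ⟨hx, h6 hg1⟩
        · have hρn1 : ρ x ≠ 1 := fun h => hg1 (h5 h)
          by_cases hr2 : ρ x = 2
          · right; left; exact ⟨hx, hr2, by omega⟩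
          · right; right; left; exact ⟨hx, by omega, by omega⟩
    · rw [hDcl, hB2, hBw, hBz]
      exact Finset.union_subset (Finset.filter_subset _ _)
        (Finset.union_subset (Finset.filter_subset _ _)
          (Finset.union_subset (Finset.filter_subset _ _) (Finset.filter_subset _ _)))
  have hcardX2 : X.card = Dcl.card + (B2.card + (Bw.card + Bz.card)) := by
    rw [hunion, Finset.card_union_of_disjoint hdD, Finset.card_union_of_disjoint hdB2,
      Finset.card_union_of_disjoint hdBzBw]
  have hsD : ∑ x ∈ Dcl, γ x = Dcl.card := by
    rw [hDcl, Finset.sum_congr rfl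
      (fun x hx => hC0 x (Finset.mem_filter.mp hx).1 (Finset.mem_filter.mp hx).2)]
    simp
  have hsB2 : ∑ x ∈ B2, γ x = B2.card * 2 := by
    rw [hB2, Finset.sum_congr rfl (fun x hx => (Finset.mem_filter.mp hx).2.2)]
    simp [mul_comm]
  have hsBw : ∑ x ∈ Bw, γ x = Bw.card * 2 := by
    rw [hBw, Finset.sum_congr rfl (fun x hx => (Finset.mem_filter.mp hx).2.2)]
    simp [mul_comm]
  have hsBz : ∑ x ∈ Bz, γ x = Bz.card * 3 := by
    rw [hBz, Finset.sum_congr rfl (fun x hx => (Finset.mem_filter.mp hx).2)]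
    simp [mul_comm]
  have hsumγX : ∑ x ∈ X, γ x
      = Dcl.card + (B2.card * 2 + (Bw.card * 2 + Bz.card * 3)) := by
    rw [hunion, Finset.sum_union hdD, Finset.sum_union hdB2, Finset.sum_union hdBzBw,
      hsD, hsB2, hsBw, hsBz]
  have hBwle : Bw.card ≤ 1 := by
    refine le_trans (Finset.card_le_card ?_) hD7ρ
    rw [hBw]
    intro z hz
    exact Finset.mem_filter.mpr ⟨(Finset.mem_filter.mp hz).1, (Finset.mem_filter.mp hz).2.1⟩
  have hBzle : Bz.card ≤ 1 := hD7γ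
  have hdle : Dcl.card ≤ s - 1 := hOρ
  have hGle : ∑ x ∈ X, γ x ≤ N := hγN X
  have hG1 : N ≤ (∑ x ∈ X, γ x) + 1 := hgbound.1
  have hodd' : t % 2 = 1 → (N - ∑ x ∈ X, γ x = 0 ∧ Bz.card = 0 ∧ Bw.card = 0) := by
    intro hto
    refine ⟨by have := hgbound.2 hto; omega, ?_, ?_⟩
    · rw [Finset.card_eq_zero]
      apply Finset.eq_empty_of_forall_notMem
      intro x hx
      rw [hBz] at hx
      have := hγ3o hto x (Finset.mem_filter.mp hx).1
      have := (Finset.mem_filter.mp hx).2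
      omega
    · rw [Finset.card_eq_zero]
      apply Finset.eq_empty_of_forall_notMem
      intro x hx
      rw [hBw] at hx
      have := hρ3o hto x (Finset.mem_filter.mp hx).1
      have := (Finset.mem_filter.mp hx).2.1
      omega
  have hgc' : N - ∑ x ∈ X, γ x = 1 → Bz.card = 0 := by
    intro hg1'
    rw [Finset.card_eq_zero]
    apply Finset.eq_empty_of_forall_notMem
    intro x hx
    rw [hBz] at hx
    have e1 := hD6γ x (Finset.mem_filter.mp hx).1
    have e2 := (Finset.mem_filter.mp hx).2
    omega
  have hsum' : 2*B2.card + 2*Bw.card + 3*Bz.card + Dcl.card + (N - ∑ x ∈ X, γ x) = N := by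
    omega
  have hcount' : B2.card + Bw.card + Bz.card + Dcl.card = s + (t - t/2) - 1 := by omega
  obtain ⟨j, e, i, hj, he, hi, hlow, hhigh⟩ :=
    coreArith s t N B2.card Bz.card Bw.card (N - ∑ x ∈ X, γ x) Dcl.card
      hs3 hst ht hN hdle hBzle hBwle (by omega) hodd' hgc' hsum' hcount'
  obtain ⟨J, hJsub, hJcard⟩ := Finset.exists_subset_card_eq hj
  obtain ⟨E, hEsub, hEcard⟩ := Finset.exists_subset_card_eq he
  obtain ⟨I, hIsub, hIcard⟩ := Finset.exists_subset_card_eq hi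
  have hJmem : ∀ x ∈ J, ρ x = 2 ∧ γ x = 2 := by
    intro x hx
    have := hJsub hx; rw [hB2] at this
    exact (Finset.mem_filter.mp this).2
  have hEmem : ∀ x ∈ E, γ x = 3 ∧ x ∈ X := by
    intro x hx
    have := hEsub hx; rw [hBz] at this
    exact ⟨(Finset.mem_filter.mp this).2, (Finset.mem_filter.mp this).1⟩
  have hImem : ∀ x ∈ I, ρ x = 1 ∧ γ x = 1 := by
    intro x hx
    have := hIsub hx; rw [hDcl] at this
    have h1 := (Finset.mem_filter.mp this).2
    exact ⟨h1, hC0 x (Finset.mem_filter.mp this).1 h1⟩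
  have hdEI : Disjoint E I := by
    rw [Finset.disjoint_left]; intro z h1 h2
    have e1 := (hEmem z h1).1
    have e2 := (hImem z h2).2
    omega
  have hdJEI : Disjoint J (E ∪ I) := by
    rw [Finset.disjoint_left]; intro z h1 h2
    have e1 := (hJmem z h1).2
    rcases Finset.mem_union.mp h2 with h2|h2
    · have e2 := (hEmem z h2).1; omega
    · have e2 := (hImem z h2).2; omega
  have hsγJ : ∑ x ∈ J, γ x = J.card * 2 := by
    rw [Finset.sum_congr rfl (fun x hx => (hJmem x hx).2)]; simp [mul_comm]
  have hsγE : ∑ x ∈ E, γ x = E.card * 3 := by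
    rw [Finset.sum_congr rfl (fun x hx => (hEmem x hx).1)]; simp [mul_comm]
  have hsγI : ∑ x ∈ I, γ x = I.card := by
    rw [Finset.sum_congr rfl (fun x hx => (hImem x hx).2)]; simp
  have hsρJ : ∑ x ∈ J, ρ x = J.card * 2 := by
    rw [Finset.sum_congr rfl (fun x hx => (hJmem x hx).1)]; simp [mul_comm]
  have hsρE : ∑ x ∈ E, ρ x ≤ E.card * 3 := by
    have := Finset.sum_le_card_nsmul E ρ 3 (fun x hx => hρ3 x (hEmem x hx).2)
    simpa using this
  have hsρI : ∑ x ∈ I, ρ x = I.card := by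
    rw [Finset.sum_congr rfl (fun x hx => (hImem x hx).1)]; simp
  have hYγ : ∑ x ∈ J ∪ (E ∪ I), γ x = J.card * 2 + (E.card * 3 + I.card) := by
    rw [Finset.sum_union hdJEI, Finset.sum_union hdEI, hsγJ, hsγE, hsγI]
  have hYρ : ∑ x ∈ J ∪ (E ∪ I), ρ x ≤ J.card * 2 + (E.card * 3 + I.card) := by
    rw [Finset.sum_union hdJEI, Finset.sum_union hdEI]
    omega
  have hF3 := F3 (J ∪ (E ∪ I)) (by omega)
  omega

/-- for `2 ≤ s < t`, `t ≥ 5` and `t + s − ⌊t/2⌋ ≤ k ≤ t + s`,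
`bgr_k(K_{1,3} : K_{s,t}) = t + s`. -/
theorem stmt16 (k s t : ℕ) (hs : 2 ≤ s) (hst : s < t) (ht : 5 ≤ t)
    (hk1 : t + s - t / 2 ≤ k) (hk2 : k ≤ t + s) :
    bgrK13Kst k s t (t + s) ∧
    (∀ n : ℕ, bgrK13Kst k s t n → t + s ≤ n) := by
  have hk5 : 5 ≤ k := by omega
  constructor
  · refine ⟨?_, ?_⟩
    · calc k ≤ t + s := hk2
        _ ≤ (t + s) * (t + s) := Nat.le_mul_of_pos_left _ (by omega)
        _ = (t + s)^2 := (pow_two _).symm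
    · intro N hN c hsurj
      by_cases hr : hasRainbowK13 c
      · exact Or.inl hr
      · exact Or.inr (upperBound_s16 c hs hst ht hk1 (by omega) hsurj hr)
  · intro n hn
    by_contra hlt
    push_neg at hlt
    obtain ⟨c, hsurj, hnr, hnm⟩ := lowerConstr k s t hs hst ht (by omega) hk2
    rcases hn.2 (t + s - 1) (by omega) c hsurj with h|h
    · exact hnr h
    · exact hnm h
end
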